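/- arXiv:1804.01204 — 7 statements merged into one kernel-verified Lean document; each statement's English description precedes it below -/
import Mathlib

section
/- Let G be a finite group and H ⊆ G a subset with 1 ∉ H, H = H⁻¹, and H invariant under conjugation by G. Then the Cayley graph Cay(G,H) (with adjacency matrix A indexed by G, where A(u,v) = 1 iff v·u⁻¹ ∈ H) has singular adjacency matrix if and only if there exists an irreducible complex character χ of G with ∑_{h ∈ H} χ(h) = 0. -/
open CategoryTheory

namespace CayleyAux

variable {G : Type} [Group G] [Fintype G] [DecidableEq G]


noncomputable abbrev elt (H : Finset G) : MonoidAlgebra ℂ G :=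
  ∑ h ∈ H, MonoidAlgebra.single h (1 : ℂ)

omit [Fintype G] [DecidableEq G] in
theorem single_comm_elt (H : Finset G)
    (h_conj : ∀ g : G, ∀ h ∈ H, g * h * g⁻¹ ∈ H) (g : G) :
    MonoidAlgebra.single g (1 : ℂ) * elt H = elt H * MonoidAlgebra.single g (1 : ℂ) := by
  rw [Finset.mul_sum, Finset.sum_mul]
  refine Finset.sum_nbij' (fun h => g * h * g⁻¹) (fun h => g⁻¹ * h * g)
    (fun h hh => h_conj g h hh) (fun h hh => by simpa using h_conj g⁻¹ h hh)
    (fun h _ => by group) (fun h _ => by group) ?_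
  intro h hh
  simp only [MonoidAlgebra.single_mul_single, one_mul]
  congr 1
  group

omit [Fintype G] [DecidableEq G] in
theorem elt_central (H : Finset G)
    (h_conj : ∀ g : G, ∀ h ∈ H, g * h * g⁻¹ ∈ H) (x : MonoidAlgebra ℂ G) :
    elt H * x = x * elt H := by
  refine MonoidAlgebra.induction_on (motive := fun y => elt H * y = y * elt H) x
    (fun g => ?_) (fun f g hf hg => ?_) (fun r f hf => ?_)
  · exact (single_comm_elt H h_conj g).symm
  · show elt H * (f + g) = (f + g) * elt H
    rw [mul_add, add_mul, hf, hg]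
  · show elt H * (r • f) = (r • f) * elt H
    rw [mul_smul_comm, smul_mul_assoc, hf]

noncomputable def maBasis (G : Type) [Group G] : Module.Basis G ℂ (MonoidAlgebra ℂ G) :=
  MonoidAlgebra.basis G ℂ

theorem toMatrix_eq (H : Finset G) :
    LinearMap.toMatrix (maBasis G) (maBasis G) (LinearMap.mulLeft ℂ (elt H)) =
      Matrix.transpose (Matrix.of fun u v : G => if v * u⁻¹ ∈ H then (1 : ℂ) else 0) := by
  set b : Module.Basis G ℂ (MonoidAlgebra ℂ G) := maBasis G with hbdef
  ext u v
  rw [LinearMap.toMatrix_apply]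
  have hb : (b v : MonoidAlgebra ℂ G) = MonoidAlgebra.single v 1 := by
    exact MonoidAlgebra.basis_apply ℂ v
  rw [hb]
  have h1 : LinearMap.mulLeft ℂ (elt H) (MonoidAlgebra.single v 1) =
      ∑ h ∈ H, MonoidAlgebra.single (h * v) (1 : ℂ) := by
    rw [LinearMap.mulLeft_apply, Finset.sum_mul]
    exact Finset.sum_congr rfl fun h _ => by
      rw [MonoidAlgebra.single_mul_single, one_mul]
  rw [h1, map_sum]
  have hrepr : ∀ x : MonoidAlgebra ℂ G, b.repr x = x.coeff := fun _ => rfl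
  simp only [hrepr]
  rw [Finsupp.finset_sum_apply]
  have h2 : ∀ h ∈ H, (MonoidAlgebra.single (h * v) (1:ℂ)).coeff u
      = if h = u * v⁻¹ then (1:ℂ) else 0 := by
    intro h _
    rw [MonoidAlgebra.coeff_single_apply]
    congr 1
    simp only [eq_iff_iff]
    constructor
    · rintro rfl; group
    · rintro rfl; group
  rw [Finset.sum_congr rfl h2, Finset.sum_ite_eq' H (u * v⁻¹) (fun _ => (1:ℂ))]
  simp [Matrix.transpose_apply]

theorem det_zero_iff (H : Finset G) :
    (Matrix.of fun u v : G => if v * u⁻¹ ∈ H then (1 : ℂ) else 0).det = 0 ↔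
      ¬ IsUnit (elt H) := by
  have hdet_eq : (Matrix.of fun u v : G => if v * u⁻¹ ∈ H then (1 : ℂ) else 0).det =
      LinearMap.det (LinearMap.mulLeft ℂ (elt H)) := by
    rw [← Matrix.det_transpose, ← toMatrix_eq (G := G) H, LinearMap.det_toMatrix]
  rw [hdet_eq]
  constructor
  · intro hdet hu
    have hk := LinearMap.bot_lt_ker_of_det_eq_zero hdet
    obtain ⟨x, hx, hx0⟩ := SetLike.exists_of_lt hk
    have hax : elt H * x = 0 := by simpa [LinearMap.mem_ker] using hx
    apply hx0
    calc x = (↑hu.unit⁻¹ * elt H) * x := by rw [IsUnit.val_inv_mul, one_mul]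
      _ = ↑hu.unit⁻¹ * (elt H * x) := by rw [mul_assoc]
      _ = 0 := by rw [hax, mul_zero]
  · intro hu
    by_contra hdet
    apply hu
    set b : Module.Basis G ℂ (MonoidAlgebra ℂ G) := maBasis G with hbdef
    have hmat : IsUnit (LinearMap.toMatrix b b (LinearMap.mulLeft ℂ (elt H))) :=
      (Matrix.isUnit_iff_isUnit_det _).mpr (isUnit_iff_ne_zero.mpr
        (by rw [LinearMap.det_toMatrix]; exact hdet))
    have hL : IsUnit (LinearMap.mulLeft ℂ (elt H)) := by
      have := hmat.map (LinearMap.toMatrixAlgEquiv b).symm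
      have heq : (LinearMap.toMatrixAlgEquiv b).symm
          (LinearMap.toMatrix b b (LinearMap.mulLeft ℂ (elt H)))
          = LinearMap.mulLeft ℂ (elt H) := by
        show (LinearMap.toMatrixAlgEquiv b).symm
          ((LinearMap.toMatrixAlgEquiv b) (LinearMap.mulLeft ℂ (elt H))) = _
        exact AlgEquiv.symm_apply_apply _ _
      rwa [heq] at this
    obtain ⟨x, hx⟩ := ((Module.End.isUnit_iff _).mp hL).surjective 1
    have hx' : elt H * x = 1 := by simpa using hx
    have hxa : x * elt H = 1 := by
      have hinj := ((Module.End.isUnit_iff _).mp hL).injective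
      have : LinearMap.mulLeft ℂ (elt H) (x * elt H) = LinearMap.mulLeft ℂ (elt H) 1 := by
        simp only [LinearMap.mulLeft_apply, mul_one, ← mul_assoc, hx']
        rw [one_mul]
      exact hinj this
    exact ⟨⟨elt H, x, hx', hxa⟩, rfl⟩



noncomputable def rhoOfModule (M : Type) [AddCommGroup M] [Module ℂ M]
    [Module (MonoidAlgebra ℂ G) M] [IsScalarTower ℂ (MonoidAlgebra ℂ G) M] :
    Representation ℂ G M where
  toFun g :=
    { toFun := fun m => (MonoidAlgebra.single g (1 : ℂ) : MonoidAlgebra ℂ G) • m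
      map_add' := fun x y => smul_add _ x y
      map_smul' := fun c x => smul_comm _ c x }
  map_one' := by
    ext m
    show (MonoidAlgebra.single (1:G) (1:ℂ) : MonoidAlgebra ℂ G) • m = m
    rw [← MonoidAlgebra.one_def, one_smul]
  map_mul' g h := by
    ext m
    show (MonoidAlgebra.single (g * h) (1:ℂ) : MonoidAlgebra ℂ G) • m = _
    have : (MonoidAlgebra.single (g * h) (1:ℂ) : MonoidAlgebra ℂ G) =
        MonoidAlgebra.single g 1 * MonoidAlgebra.single h 1 := by
      rw [MonoidAlgebra.single_mul_single, one_mul]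
    rw [this, mul_smul]
    rfl

noncomputable def promote (M : Type) [AddCommGroup M] [Module ℂ M]
    [Module (MonoidAlgebra ℂ G) M] [IsScalarTower ℂ (MonoidAlgebra ℂ G) M]
    (p : Submodule ℂ M)
    (hp : ∀ (g : G), ∀ x ∈ p, (MonoidAlgebra.single g (1:ℂ) : MonoidAlgebra ℂ G) • x ∈ p) :
    Submodule (MonoidAlgebra ℂ G) M where
  carrier := p
  add_mem' := fun ha hb => p.add_mem ha hb
  zero_mem' := p.zero_mem
  smul_mem' := by
    intro r x hx
    have hr : r • x = ∑ g ∈ r.coeff.support,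
        (r.coeff g) • ((MonoidAlgebra.single g (1:ℂ) : MonoidAlgebra ℂ G) • x) := by
      conv_lhs => rw [← MonoidAlgebra.sum_coeff_single r]
      rw [Finsupp.sum, Finset.sum_smul]
      refine Finset.sum_congr rfl fun g _ => ?_
      rw [← smul_assoc]
      congr 1
      show (MonoidAlgebra.single g (r.coeff g) : MonoidAlgebra ℂ G) = r.coeff g • MonoidAlgebra.single g (1:ℂ)
      rw [MonoidAlgebra.smul_single', mul_one]
    rw [hr]
    exact Submodule.sum_mem p fun g _ => p.smul_mem _ (hp g x hx)

noncomputable def subrep (Y : FDRep ℂ G) (p : Submodule ℂ Y)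
    (hp : ∀ (g : G), ∀ x ∈ p, Y.ρ g x ∈ p) : Representation ℂ G p where
  toFun g := (Y.ρ g).restrict (fun x hx => hp g x hx)
  map_one' := by ext x; simp [LinearMap.restrict_apply]
  map_mul' g h := by ext x; simp [LinearMap.restrict_apply]

theorem hom_comm_apply' {Y X : FDRep ℂ G} (f : Y ⟶ X) (g : G) (y : Y) :
    f.hom (Y.ρ g y) = X.ρ g (f.hom y) :=
  LinearMap.ext_iff.mp (congrArg (fun φ : Y.V ⟶ X.V => φ.hom.hom) (f.comm g)) y

noncomputable abbrev fdrepOfModule (M : Type) [AddCommGroup M] [Module ℂ M]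
    [Module (MonoidAlgebra ℂ G) M] [IsScalarTower ℂ (MonoidAlgebra ℂ G) M]
    [FiniteDimensional ℂ M] : FDRep ℂ G :=
  FDRep.of (rhoOfModule M)

theorem simple_of_isSimpleModule (M : Type) [AddCommGroup M] [Module ℂ M]
    [Module (MonoidAlgebra ℂ G) M] [IsScalarTower ℂ (MonoidAlgebra ℂ G) M]
    [FiniteDimensional ℂ M] [hM : IsSimpleModule (MonoidAlgebra ℂ G) M] :
    Simple (fdrepOfModule (G := G) M) := by
  haveI : Nontrivial M := IsSimpleModule.nontrivial (MonoidAlgebra ℂ G) M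
  constructor
  intro Y f hmono
  constructor
  · intro hiso h0
    obtain ⟨m, hm⟩ := exists_ne (0 : M)
    apply hm
    have h2 : (𝟙 (fdrepOfModule (G := G) M)) = 0 := by
      apply (cancel_epi f).mp
      rw [Limits.comp_zero, Category.comp_id, h0]
    exact congrArg
      (fun (ψ : fdrepOfModule (G := G) M ⟶ fdrepOfModule (G := G) M) =>
        ψ.hom.hom.hom m) h2
  · intro hne
    -- f.hom as a linear map
    let lf : (↥Y →ₗ[ℂ] M) := f.hom.hom.hom
    have hlf : ∀ (g : G) (y : Y), lf (Y.ρ g y) = rhoOfModule M g (lf y) :=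
      fun g y => hom_comm_apply' f g y
    -- the range is an invariant subspace, hence a monoid-algebra submodule
    have hrange_inv : ∀ (g : G), ∀ x ∈ LinearMap.range lf,
        (MonoidAlgebra.single g (1:ℂ) : MonoidAlgebra ℂ G) • x ∈ LinearMap.range lf := by
      rintro g x ⟨y, rfl⟩
      exact ⟨Y.ρ g y, (hlf g y)⟩
    have hQ := IsSimpleOrder.eq_bot_or_eq_top (promote M (LinearMap.range lf) hrange_inv)
    have hQne : promote M (LinearMap.range lf) hrange_inv ≠ ⊥ := by
      intro hbot
      apply hne
      have hz : lf = 0 := by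
        ext y
        have : lf y ∈ promote M (LinearMap.range lf) hrange_inv := ⟨y, rfl⟩
        rw [hbot] at this
        simpa using this
      ext y
      show lf y = _
      rw [hz]
      rfl
    have hsurj : Function.Surjective lf := by
      intro x
      have : x ∈ promote M (LinearMap.range lf) hrange_inv := by
        rw [hQ.resolve_left hQne]; trivial
      exact this
    -- the kernel is invariant
    have hker_inv : ∀ (g : G), ∀ x ∈ LinearMap.ker lf, Y.ρ g x ∈ LinearMap.ker lf := by
      intro g x hx
      rw [LinearMap.mem_ker] at hx ⊢
      rw [hlf g x, hx, map_zero]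
    have hinj : Function.Injective lf := by
      rw [← LinearMap.ker_eq_bot]
      by_contra hker
      obtain ⟨x, hx, hx0⟩ := (Submodule.ne_bot_iff _).mp hker
      let K : FDRep ℂ G := FDRep.of (subrep Y (LinearMap.ker lf) hker_inv)
      let ι : K ⟶ Y := ⟨ConcreteCategory.ofHom (LinearMap.ker lf).subtype, fun g => by
        ext z
        show (LinearMap.ker lf).subtype ((subrep Y (LinearMap.ker lf) hker_inv) g z) = _
        rfl⟩
      have hcomp : ι ≫ f = (0 : K ⟶ _) ≫ f := by
        rw [Limits.zero_comp]
        ext z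
        show lf ((LinearMap.ker lf).subtype z) = _
        have := z.2
        rw [LinearMap.mem_ker] at this
        exact this.trans rfl
      have hι : ι = 0 := (cancel_mono f).mp hcomp
      apply hx0
      have : ι.hom ⟨x, hx⟩ = x := rfl
      rw [hι] at this
      exact this.symm.trans rfl
    -- build the inverse
    let e : ↥Y ≃ₗ[ℂ] M := LinearEquiv.ofBijective lf ⟨hinj, hsurj⟩
    have hg : ∀ (g : G) (x : M), e.symm (rhoOfModule M g x) = Y.ρ g (e.symm x) := by
      intro g x
      apply hinj
      show e (e.symm _) = lf _
      rw [LinearEquiv.apply_symm_apply, hlf g]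
      show _ = rhoOfModule M g (e (e.symm x))
      rw [LinearEquiv.apply_symm_apply]
    let ginv : fdrepOfModule (G := G) M ⟶ Y := ⟨ConcreteCategory.ofHom (e.symm : M →ₗ[ℂ] ↥Y), fun g => by
      ext x
      show e.symm.toLinearMap (rhoOfModule (G := G) M g x) = Y.ρ g (e.symm.toLinearMap x)
      exact hg g x⟩
    refine ⟨⟨ginv, ?_, ?_⟩⟩
    · ext y
      show e.symm (lf y) = y
      exact e.symm_apply_apply y
    · ext x
      show lf (e.symm x) = x
      exact e.apply_symm_apply x

theorem char_sum_eq_zero (M : Type) [AddCommGroup M] [Module ℂ M]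
    [Module (MonoidAlgebra ℂ G) M] [IsScalarTower ℂ (MonoidAlgebra ℂ G) M]
    [FiniteDimensional ℂ M] (H : Finset G)
    (hann : ∀ m : M, (∑ h ∈ H, MonoidAlgebra.single h (1:ℂ) : MonoidAlgebra ℂ G) • m = 0) :
    ∑ h ∈ H, (fdrepOfModule (G := G) M).character h = 0 := by
  have h1 : ∑ h ∈ H, (fdrepOfModule (G := G) M).character h
      = LinearMap.trace ℂ M (∑ h ∈ H, rhoOfModule M h) := by
    rw [map_sum]
    rfl
  rw [h1]
  have h2 : (∑ h ∈ H, rhoOfModule M h) = (0 : M →ₗ[ℂ] M) := by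
    ext m
    rw [LinearMap.sum_apply]
    show ∑ h ∈ H, (MonoidAlgebra.single h (1:ℂ) : MonoidAlgebra ℂ G) • m = _
    rw [← Finset.sum_smul, hann m]
    rfl
  rw [h2, map_zero]


theorem sum_char_ne_zero_of_isUnit (H : Finset G)
    (h_conj : ∀ g : G, ∀ h ∈ H, g * h * g⁻¹ ∈ H)
    (hu : IsUnit (elt H)) (V : FDRep ℂ G) [Simple V] :
    ∑ h ∈ H, V.character h ≠ 0 := by
  intro hsum
  -- V is nontrivial
  haveI : Nontrivial V := by
    rw [← not_subsingleton_iff_nontrivial]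
    intro hsub
    apply CategoryTheory.id_nonzero V
    ext v
    exact @Subsingleton.elim _ hsub _ _
  let f : Module.End ℂ V := Representation.asAlgebraHom V.ρ (elt H)
  have hfu : IsUnit f := hu.map (Representation.asAlgebraHom V.ρ)
  -- f is equivariant
  have hcomm : ∀ g : G, ∀ v : V, f (V.ρ g v) = V.ρ g (f v) := by
    intro g v
    have h1 := congrArg (Representation.asAlgebraHom V.ρ) (single_comm_elt H h_conj g)
    rw [map_mul, map_mul, Representation.asAlgebraHom_single_one] at h1
    exact (LinearMap.ext_iff.mp h1 v).symm
  let φ : V ⟶ V := ⟨ConcreteCategory.ofHom f, fun g => by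
    ext v
    show f (V.ρ g v) = V.ρ g (f v)
    exact hcomm g v⟩
  obtain ⟨c, hc⟩ := CategoryTheory.endomorphism_simple_eq_smul_id (𝕜 := ℂ) φ
  have hf_eq : f = c • (LinearMap.id : V →ₗ[ℂ] V) := by
    have h2 := congrArg (fun (ψ : V ⟶ V) => ψ.hom.hom.hom) hc
    exact h2.symm
  -- trace of f equals the character sum
  have htr : LinearMap.trace ℂ V f = ∑ h ∈ H, V.character h := by
    show LinearMap.trace ℂ V (Representation.asAlgebraHom V.ρ (∑ h ∈ H, MonoidAlgebra.single h 1))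
      = _
    rw [map_sum, map_sum]
    refine Finset.sum_congr rfl fun h _ => ?_
    rw [Representation.asAlgebraHom_single_one]
    rfl
  have htr2 : LinearMap.trace ℂ V f = c * Module.finrank ℂ V := by
    rw [hf_eq, map_smul, LinearMap.trace_id, smul_eq_mul]
  have hc0 : c = 0 := by
    have hfr : ((Module.finrank ℂ V : ℕ) : ℂ) ≠ 0 :=
      Nat.cast_ne_zero.mpr Module.finrank_pos.ne'
    have h0 : c * ((Module.finrank ℂ V : ℕ) : ℂ) = 0 := by rw [← htr2, htr, hsum]
    rcases mul_eq_zero.mp h0 with h | h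
    · exact h
    · exact absurd h hfr
  have hf0 : f = 0 := by rw [hf_eq, hc0, zero_smul]
  obtain ⟨v, hv⟩ := exists_ne (0 : V)
  have hbij := (Module.End.isUnit_iff f).mp hfu
  apply hv
  apply hbij.injective
  rw [hf0]
  rfl



theorem main_forward (H : Finset G)
    (h_conj : ∀ g : G, ∀ h ∈ H, g * h * g⁻¹ ∈ H)
    (hu : ¬ IsUnit (elt H)) :
    ∃ V : FDRep ℂ G, Simple V ∧ ∑ h ∈ H, V.character h = 0 := by
  classical
  haveI : NeZero ((Fintype.card G : ℂ)) := ⟨by exact_mod_cast Fintype.card_ne_zero⟩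
  haveI : FiniteDimensional ℂ (MonoidAlgebra ℂ G) :=
    Module.Finite.equiv ((MonoidAlgebra.coeffLinearEquiv ℂ).trans (Finsupp.linearEquivFunOnFinite ℂ ℂ G)).symm
  set N : Submodule (MonoidAlgebra ℂ G) (MonoidAlgebra ℂ G) :=
    Submodule.span (MonoidAlgebra ℂ G) {elt H} with hNdef
  have hN : N ≠ ⊤ := by
    intro htop
    apply hu
    have h1 : (1 : MonoidAlgebra ℂ G) ∈ N := by rw [htop]; trivial
    obtain ⟨r, hr⟩ := Submodule.mem_span_singleton.mp h1
    rw [smul_eq_mul] at hr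
    have hr2 : elt H * r = 1 := by rw [elt_central H h_conj r, hr]
    exact ⟨⟨elt H, r, hr2, hr⟩, rfl⟩
  haveI : Nontrivial ((MonoidAlgebra ℂ G) ⧸ N) :=
    Submodule.Quotient.nontrivial_iff.mpr hN.lt_top.ne
  haveI : FiniteDimensional ℂ ((MonoidAlgebra ℂ G) ⧸ N) :=
    Module.Finite.of_surjective (N.mkQ.restrictScalars ℂ) N.mkQ_surjective
  obtain ⟨S, hS⟩ := IsSemisimpleModule.exists_simple_submodule
    (R := MonoidAlgebra ℂ G) (M := (MonoidAlgebra ℂ G) ⧸ N)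
  haveI := hS
  haveI : FiniteDimensional ℂ ↥S :=
    FiniteDimensional.of_injective (S.subtype.restrictScalars ℂ) S.injective_subtype
  have hannQ : ∀ q : (MonoidAlgebra ℂ G) ⧸ N, elt H • q = 0 := by
    intro q
    obtain ⟨x, rfl⟩ := N.mkQ_surjective q
    show elt H • Submodule.Quotient.mk x = 0
    rw [← Submodule.Quotient.mk_smul, Submodule.Quotient.mk_eq_zero]
    rw [smul_eq_mul, elt_central H h_conj x]
    exact Submodule.smul_mem _ x (Submodule.mem_span_singleton_self _)
  have hann : ∀ m : ↥S, (∑ h ∈ H, MonoidAlgebra.single h (1:ℂ) : MonoidAlgebra ℂ G) • m = 0 := by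
    intro m
    apply Subtype.ext
    show ((elt H • m : ↥S) : (MonoidAlgebra ℂ G) ⧸ N) = _
    rw [Submodule.coe_smul]
    rw [hannQ (↑m : (MonoidAlgebra ℂ G) ⧸ N)]
    rfl
  exact ⟨fdrepOfModule (G := G) ↥S, simple_of_isSimpleModule ↥S,
    char_sum_eq_zero ↥S H hann⟩

end CayleyAux

open CayleyAux

/-- Theorem 1.1: For a finite group `G` and a `G`-invariant connecting-type set `H`
(no identity, closed under inverses, closed under conjugation), the Cayley graph
`Cay(G,H)` is singular iff some irreducible complex character `χ` of `G` satisfies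
`∑ h ∈ H, χ h = 0`. -/
theorem cayley_singular_iff_char_sum_zero {G : Type} [Group G] [Fintype G] [DecidableEq G]
    (H : Finset G) (h_one : (1 : G) ∉ H)
    (h_inv : ∀ h ∈ H, h⁻¹ ∈ H)
    (h_conj : ∀ g : G, ∀ h ∈ H, g * h * g⁻¹ ∈ H) :
    (Matrix.of fun u v : G => if v * u⁻¹ ∈ H then (1 : ℂ) else 0).det = 0 ↔
      ∃ V : FDRep ℂ G, Simple V ∧ ∑ h ∈ H, V.character h = 0 := by
  rw [CayleyAux.det_zero_iff H]
  constructor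
  · intro hu
    exact main_forward H h_conj hu
  · rintro ⟨V, hV, hsum⟩ hu
    haveI := hV
    exact sum_char_ne_zero_of_isUnit H h_conj hu V hsum
end

section
/- Let G be a finite group, H = h^G a single conjugacy class of G with 1 ∉ H and H = H⁻¹, and H conjugation-invariant. Then the adjacency matrix of Cay(G,H) is singular if and only if there exists an irreducible complex character χ of G with χ(h) = 0. -/
open CategoryTheory Finset

namespace CayleyAux

variable {G : Type} [Group G] [Fintype G] [DecidableEq G]

noncomputable section

def cls (h : G) : Finset G := Finset.univ.filter (fun s => IsConj h s)

lemma mem_cls {h s : G} : s ∈ cls h ↔ IsConj h s := by simp [cls]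

lemma conj_mem_cls {h : G} (g : G) {s : G} (hs : s ∈ cls h) : g * s * g⁻¹ ∈ cls h := by
  rw [mem_cls] at hs ⊢
  exact hs.trans (isConj_iff.2 ⟨g, rfl⟩)

lemma inv_mem_cls {h : G} (h_inv : IsConj h h⁻¹) {s : G} (hs : s ∈ cls h) : s⁻¹ ∈ cls h := by
  rw [mem_cls] at hs ⊢
  obtain ⟨c, hc⟩ := isConj_iff.1 hs
  exact h_inv.trans (isConj_iff.2 ⟨c, by rw [← hc]; group⟩)

lemma sum_cls_inv {h : G} (h_inv : IsConj h h⁻¹) {M : Type*} [AddCommMonoid M] (F : G → M) :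
    ∑ s ∈ cls h, F s⁻¹ = ∑ s ∈ cls h, F s := by
  refine Finset.sum_nbij' (fun s => s⁻¹) (fun s => s⁻¹) ?_ ?_ ?_ ?_ ?_
  · intro s hs; exact inv_mem_cls h_inv hs
  · intro s hs; exact inv_mem_cls h_inv hs
  · intro s _; simp
  · intro s _; simp
  · intro s _; simp

def classSum (h : G) {W : Type} [AddCommGroup W] [Module ℂ W]
    (ρ : Representation ℂ G W) : W →ₗ[ℂ] W := ∑ s ∈ cls h, ρ s

lemma classSum_apply_comm (h : G) {W : Type} [AddCommGroup W] [Module ℂ W]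
    (ρ : Representation ℂ G W) (g : G) (x : W) :
    ρ g (classSum h ρ x) = classSum h ρ (ρ g x) := by
  unfold classSum
  rw [LinearMap.sum_apply, map_sum, LinearMap.sum_apply]
  refine Finset.sum_nbij' (fun s => g * s * g⁻¹) (fun s => g⁻¹ * s * g) ?_ ?_ ?_ ?_ ?_
  · intro s hs; exact conj_mem_cls g hs
  · intro s hs; simpa using conj_mem_cls g⁻¹ hs
  · intro s _; group
  · intro s _; group
  · intro s _
    rw [← Module.End.mul_apply, ← map_mul, ← Module.End.mul_apply, ← map_mul]
    congr 1; group

lemma trace_classSum (h : G) (V : FDRep ℂ G) :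
    LinearMap.trace ℂ V (∑ s ∈ cls h, V.ρ s) = ((cls h).card : ℂ) * V.character h := by
  rw [map_sum]
  rw [Finset.sum_congr rfl (fun s hs => ?_), Finset.sum_const, nsmul_eq_mul]
  obtain ⟨c, hc⟩ := isConj_iff.1 (mem_cls.1 hs)
  show V.character s = V.character h
  rw [← hc, FDRep.char_conj]

lemma mulVec_eq (h : G) (w : G → ℂ) (u : G) :
    ((Matrix.of fun u v : G => if IsConj h (v * u⁻¹) then (1:ℂ) else 0).mulVec w) u
      = ∑ s ∈ cls h, w (s * u) := by
  show ∑ v, (if IsConj h (v * u⁻¹) then (1:ℂ) else 0) * w v = _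
  simp only [ite_mul, one_mul, zero_mul]
  rw [← Finset.sum_filter]
  refine Finset.sum_nbij' (fun v => v * u⁻¹) (fun s => s * u) ?_ ?_ ?_ ?_ ?_
  · intro v hv; rw [mem_cls]; exact (Finset.mem_filter.1 hv).2
  · intro s hs; simp only [Finset.mem_filter, Finset.mem_univ, true_and]
    simpa using mem_cls.1 hs
  · intro v _; group
  · intro s _; group
  · intro v _; simp

/-! ### Restriction of a representation to an invariant subspace -/

def resRep {W : Type} [AddCommGroup W] [Module ℂ W] (ρ : Representation ℂ G W)
    (p : Submodule ℂ W) (hp : ∀ g, ∀ x ∈ p, ρ g x ∈ p) : Representation ℂ G p where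
  toFun g := (ρ g).restrict (hp g)
  map_one' := by ext x; simp [LinearMap.restrict_apply]
  map_mul' g₁ g₂ := by ext x; simp [LinearMap.restrict_apply]

set_option maxHeartbeats 1000000 in
lemma simple_resRep {W : Type} [AddCommGroup W] [Module ℂ W] [FiniteDimensional ℂ W]
    (ρ : Representation ℂ G W) (S : Submodule ℂ W)
    (hS : ∀ g, ∀ x ∈ S, ρ g x ∈ S) (hne : S ≠ ⊥)
    (hmin : ∀ q : Submodule ℂ W, q ≤ S → (∀ g, ∀ x ∈ q, ρ g x ∈ q) → q ≠ ⊥ → q = S) :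
    Simple (FDRep.of (resRep ρ S hS)) := by
  set V := FDRep.of (resRep ρ S hS) with hV
  constructor
  intro Y f hfmono
  constructor
  · intro hiso h0
    have h1 : (𝟙 V : V ⟶ V) = 0 := by
      obtain ⟨g, -, hg2⟩ := hiso.out
      rw [h0, Limits.comp_zero] at hg2
      exact hg2.symm
    have h2 : ∀ x : S, x = 0 := by
      intro x
      have := congrArg Action.Hom.hom h1
      rw [Action.id_hom, Action.zero_hom] at this
      calc x = (𝟙 V.V : V.V ⟶ V.V) x := rfl
        _ = (0 : V.V ⟶ V.V) x := by rw [this]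
        _ = 0 := rfl
    apply hne
    rw [Submodule.eq_bot_iff]
    intro x hx
    exact congrArg Subtype.val (h2 ⟨x, hx⟩)
  · intro hfne
    let F : Y.V →ₗ[ℂ] S := f.hom.hom.hom
    have hcomm : ∀ (g : G) (x : Y.V), F (Y.ρ g x) = resRep ρ S hS g (F x) := fun g x =>
      LinearMap.congr_fun (congrArg (fun k => k.hom.hom) (f.comm g)) x
    have hKinv : ∀ g, ∀ x ∈ LinearMap.ker F, Y.ρ g x ∈ LinearMap.ker F := by
      intro g x hx
      rw [LinearMap.mem_ker] at hx ⊢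
      exact (hcomm g x).trans (by rw [hx, map_zero])
    have hK : LinearMap.ker F = ⊥ := by
      by_contra hKne
      obtain ⟨x₀, hx₀mem, hx₀⟩ := Submodule.ne_bot_iff _ |>.1 hKne
      let Z : FDRep ℂ G := FDRep.of (resRep Y.ρ (LinearMap.ker F) hKinv)
      let ι : Z ⟶ Y := ⟨FGModuleCat.ofHom (LinearMap.ker F).subtype, fun g => rfl⟩
      have hι : ι ≫ f = 0 := by
        apply Action.hom_ext
        rw [Action.comp_hom, Action.zero_hom]
        apply FGModuleCat.hom_ext
        apply LinearMap.ext
        intro x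
        show F ((LinearMap.ker F).subtype x) = 0
        simpa using x.2
      have hι0 : ι = 0 := by
        apply (cancel_mono f).1
        rw [hι, Limits.zero_comp]
      apply hx₀
      have := congrArg Action.Hom.hom hι0
      rw [Action.zero_hom] at this
      have := LinearMap.congr_fun (congrArg (fun k => k.hom.hom) this) ⟨x₀, hx₀mem⟩
      exact this
    have hFinj : Function.Injective F := LinearMap.ker_eq_bot.1 hK
    have hFne : F ≠ 0 := by
      intro h0
      apply hfne
      apply Action.hom_ext
      rw [Action.zero_hom]
      exact FGModuleCat.hom_ext h0
    have hrange : LinearMap.range F = ⊤ := by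
      set q : Submodule ℂ W := (LinearMap.range F).map S.subtype with hq
      have hsub : q ≤ S := by
        rintro _ ⟨y, -, rfl⟩
        exact y.2
      have hqinv : ∀ g, ∀ x ∈ q, ρ g x ∈ q := by
        rintro g _ ⟨y, ⟨z, rfl⟩, rfl⟩
        refine ⟨F (Y.ρ g z), ⟨_, rfl⟩, ?_⟩
        exact congrArg Subtype.val (hcomm g z)
      have hqne : q ≠ ⊥ := by
        obtain ⟨y, hy⟩ := DFunLike.ne_iff.1 hFne
        rw [Submodule.ne_bot_iff]
        refine ⟨(F y : W), ⟨F y, ⟨y, rfl⟩, rfl⟩, ?_⟩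
        simpa using hy
      have hqS := hmin q hsub hqinv hqne
      have : (LinearMap.range F).map S.subtype = (⊤ : Submodule ℂ S).map S.subtype := by
        rw [Submodule.map_top, Submodule.range_subtype, ← hq, hqS]
      exact Submodule.map_injective_of_injective S.injective_subtype this
    have hFbij : Function.Bijective F :=
      ⟨hFinj, LinearMap.range_eq_top.1 hrange⟩
    let e : Y.V ≃ₗ[ℂ] S := LinearEquiv.ofBijective F hFbij
    have : IsIso f.hom := by
      refine ⟨FGModuleCat.ofHom (e.symm.toLinearMap : (S : Type) →ₗ[ℂ] Y.V), ?_, ?_⟩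
      · apply FGModuleCat.hom_ext; apply LinearMap.ext; intro x
        exact e.symm_apply_apply x
      · apply FGModuleCat.hom_ext; apply LinearMap.ext; intro x
        exact e.apply_symm_apply x
    exact Action.isIso_of_hom_isIso f

/-! ### The regular representation -/

def ρreg : Representation ℂ G (G → ℂ) where
  toFun g :=
    { toFun := fun x => fun u => x (g⁻¹ * u)
      map_add' := fun x y => rfl
      map_smul' := fun c x => rfl }
  map_one' := by ext x u; simp
  map_mul' g₁ g₂ := by ext x u; simp [mul_assoc]

lemma classSum_reg_apply {h : G} (h_inv : IsConj h h⁻¹) (x : G → ℂ) (u : G) :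
    classSum h ρreg x u = ∑ s ∈ cls h, x (s * u) := by
  unfold classSum
  rw [LinearMap.sum_apply, Finset.sum_apply]
  rw [← sum_cls_inv h_inv (fun s => x (s * u))]
  refine Finset.sum_congr rfl fun s _ => ?_
  rfl

/-! ### Direction 2: singular matrix gives a vanishing character -/

lemma exists_simple_char_zero {h : G} (h_inv : IsConj h h⁻¹) (w : G → ℂ) (hw : w ≠ 0)
    (hker : ∀ u, ∑ s ∈ cls h, w (s * u) = 0) :
    ∃ V : FDRep ℂ G, Simple V ∧ V.character h = 0 := by
  set K : Submodule ℂ (G → ℂ) := LinearMap.ker (classSum h ρreg) with hKdef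
  have hwK : w ∈ K := by
    rw [LinearMap.mem_ker]
    funext u
    rw [classSum_reg_apply h_inv w u]
    exact hker u
  have hKinv : ∀ g, ∀ x ∈ K, ρreg g x ∈ K := by
    intro g x hx
    rw [LinearMap.mem_ker] at hx ⊢
    rw [← classSum_apply_comm, hx, map_zero]
  have hKne : K ≠ ⊥ := Submodule.ne_bot_iff _ |>.2 ⟨w, hwK, hw⟩
  -- find a minimal nonzero invariant subspace of K
  set P : Set ℕ := {n | ∃ p : Submodule ℂ (G → ℂ),
    (p ≠ ⊥ ∧ p ≤ K ∧ ∀ g, ∀ x ∈ p, ρreg g x ∈ p) ∧ Module.finrank ℂ p = n} with hP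
  have hPne : P.Nonempty := ⟨_, K, ⟨hKne, le_refl K, hKinv⟩, rfl⟩
  obtain ⟨S, ⟨hSne, hSK, hSinv⟩, hSrank⟩ := Nat.sInf_mem hPne
  have hmin : ∀ q : Submodule ℂ (G → ℂ), q ≤ S → (∀ g, ∀ x ∈ q, ρreg g x ∈ q) → q ≠ ⊥ →
      q = S := by
    intro q hqS hqinv hqne
    have hq : Module.finrank ℂ q ∈ P := ⟨q, ⟨hqne, le_trans hqS hSK, hqinv⟩, rfl⟩
    have h2 := Nat.sInf_le hq
    rw [← hSrank] at h2
    exact Submodule.eq_of_le_of_finrank_le hqS h2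
  refine ⟨FDRep.of (resRep ρreg S hSinv), simple_resRep ρreg S hSinv hSne hmin, ?_⟩
  set V := FDRep.of (resRep ρreg S hSinv) with hV
  have hzero : (∑ s ∈ cls h, V.ρ s) = 0 := by
    apply LinearMap.ext
    intro x
    apply Subtype.ext
    show S.subtype ((∑ s ∈ cls h, V.ρ s) x) = (0 : G → ℂ)
    rw [LinearMap.sum_apply, map_sum]
    have hcoe : ∀ s ∈ cls h, S.subtype ((V.ρ s) x) = ρreg s (S.subtype x) := fun s _ => rfl
    rw [Finset.sum_congr rfl hcoe]
    have h2 : (∑ s ∈ cls h, ρreg s (S.subtype x)) = classSum h ρreg (S.subtype x) :=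
      (LinearMap.sum_apply _ _ _).symm
    rw [h2]
    exact LinearMap.mem_ker.1 (hSK x.2)
  have htr := trace_classSum h V
  rw [hzero, map_zero] at htr
  have hcard : ((cls h).card : ℂ) ≠ 0 := by
    have : h ∈ cls h := mem_cls.2 (IsConj.refl h)
    simp only [ne_eq, Nat.cast_eq_zero, Finset.card_eq_zero]
    intro hemp
    rw [hemp] at this
    simp at this
  exact (mul_eq_zero.1 htr.symm).resolve_left hcard


/-! ### Direction 1: a vanishing character gives a kernel vector -/

lemma exists_kernel_vector {h : G} (V : FDRep ℂ G) (hs : Simple V) (hχ : V.character h = 0) :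
    ∃ w : G → ℂ, w ≠ 0 ∧ ∀ u, ∑ s ∈ cls h, w (s * u) = 0 := by
  have hnt : Nontrivial V := by
    by_contra hn
    rw [not_nontrivial_iff_subsingleton] at hn
    have h1 : (𝟙 V : V ⟶ V) = 0 :=
      Action.hom_ext _ _ (FGModuleCat.hom_ext (LinearMap.ext fun x => @Subsingleton.elim _ hn _ _))
    exact CategoryTheory.id_nonzero V h1
  -- the class sum as an endomorphism in the category
  let φ : V ⟶ V := ⟨FGModuleCat.ofHom (∑ s ∈ cls h, V.ρ s : V →ₗ[ℂ] V), fun g => by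
    apply FGModuleCat.hom_ext
    apply LinearMap.ext
    intro x
    show (∑ s ∈ cls h, V.ρ s : V →ₗ[ℂ] V) (V.ρ g x) = V.ρ g ((∑ s ∈ cls h, V.ρ s) x)
    exact (classSum_apply_comm h V.ρ g x).symm⟩
  obtain ⟨c, hc⟩ := CategoryTheory.endomorphism_simple_eq_smul_id ℂ φ
  have htr := trace_classSum h V
  rw [hχ, mul_zero] at htr
  have hhomφ : φ.hom.hom.hom = (∑ s ∈ cls h, V.ρ s : V →ₗ[ℂ] V) := rfl
  have hhom : (∑ s ∈ cls h, V.ρ s : V →ₗ[ℂ] V) = c • LinearMap.id := by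
    rw [← hhomφ, ← hc, Action.smul_hom, Action.id_hom]
    rfl
  have hc0 : c = 0 := by
    rw [hhom, map_smul, LinearMap.trace_id, smul_eq_mul] at htr
    have hfr : (Module.finrank ℂ V : ℂ) ≠ 0 := by
      simp only [ne_eq, Nat.cast_eq_zero]
      exact Module.finrank_pos.ne'
    exact (mul_eq_zero.1 htr).resolve_right hfr
  have hzero : (∑ s ∈ cls h, V.ρ s : V →ₗ[ℂ] V) = 0 := by
    rw [hhom, hc0, zero_smul]
  obtain ⟨v₀, hv₀⟩ := exists_ne (0 : V)
  have : ¬ ∀ ψ : Module.Dual ℂ V, ψ v₀ = 0 := by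
    rw [Module.forall_dual_apply_eq_zero_iff]
    exact hv₀
  push_neg at this
  obtain ⟨ψ, hψ⟩ := this
  refine ⟨fun g => ψ (V.ρ g v₀), ?_, ?_⟩
  · intro h0
    apply hψ
    have := congrFun h0 1
    simpa using this
  · intro u
    have : ∀ s ∈ cls h, ψ (V.ρ (s * u) v₀) = ψ (V.ρ s (V.ρ u v₀)) := by
      intro s _
      rw [map_mul]
      rfl
    rw [Finset.sum_congr rfl this, ← map_sum, ← LinearMap.sum_apply, hzero]
    simp

end
end CayleyAux

open CayleyAux in
/-- For a finite group `G` and `H = h^G` a single conjugacy class with `1 ∉ H` and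
`H = H⁻¹`, the Cayley graph `Cay(G,H)` is singular iff some irreducible complex
character `χ` of `G` satisfies `χ h = 0`. -/
theorem cayley_singular_iff_char_zero_of_class {G : Type} [Group G] [Fintype G]
    [DecidableEq G] (h : G)
    (h_one : h ≠ 1)
    (h_inv : IsConj h h⁻¹) :
    (Matrix.of fun u v : G => if IsConj h (v * u⁻¹) then (1 : ℂ) else 0).det = 0 ↔
      ∃ V : FDRep ℂ G, Simple V ∧ V.character h = 0 := by
  rw [← Matrix.exists_mulVec_eq_zero_iff]
  constructor
  · rintro ⟨w, hw, hmv⟩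
    apply exists_simple_char_zero h_inv w hw
    intro u
    rw [← mulVec_eq h w u, hmv]
    rfl
  · rintro ⟨V, hs, hχ⟩
    obtain ⟨w, hw, hker⟩ := exists_kernel_vector V hs hχ
    refine ⟨w, hw, ?_⟩
    funext u
    rw [mulVec_eq h w u]
    exact hker u
end

section
/- An element g ∈ A_n (n ≥ 1) is conjugate in A_n to its inverse g⁻¹ if and only if one of the following holds: (1) some cycle of g has even length; (2) g has two cycles of equal odd length (fixed points count as cycles of length 1); or (3) all cycles of g have pairwise distinct odd lengths c₁,…,c_k and ∑ᵢ (cᵢ−1)/2 is even. -/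
set_option linter.unusedSectionVars false

open Equiv Equiv.Perm Finset

variable {α : Type*} [Fintype α] [DecidableEq α]

theorem Equiv.Perm.apply_inv_self {β : Type*} (f : Perm β) (x : β) : f (f⁻¹ x) = x :=
  Equiv.apply_symm_apply f x

theorem Equiv.Perm.inv_apply_self {β : Type*} (f : Perm β) (x : β) : f⁻¹ (f x) = x :=
  Equiv.symm_apply_apply f x

section beta
variable {β : Type*} [DecidableEq β]


theorem noncommProd_apply_eq_self (f : β → Perm α) (s : Finset β)
    (comm : (s : Set β).Pairwise (Function.onFun Commute f)) (x : α)
    (hfix : ∀ c ∈ s, f c x = x) : s.noncommProd f comm x = x := by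
  induction s using Finset.cons_induction with
  | empty => simp
  | cons a s ha ih =>
    rw [Finset.noncommProd_cons]
    have h1 : s.noncommProd f (comm.mono (by intro y hy; simp [hy])) x = x :=
      ih _ fun c hc => hfix c (Finset.mem_cons_of_mem hc)
    rw [Perm.mul_apply, h1, hfix a (Finset.mem_cons_self a s)]

theorem noncommProd_apply_of_mem (f : β → Perm α) (s : Finset β)
    (hdisj : (s : Set β).Pairwise fun a b => (f a).Disjoint (f b))
    (comm : (s : Set β).Pairwise (Function.onFun Commute f)) (x : α) (c : β) (hc : c ∈ s)
    (hfix : ∀ d ∈ s, d ≠ c → f d x = x) : s.noncommProd f comm x = f c x := by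
  induction s using Finset.cons_induction with
  | empty => simp at hc
  | cons a s ha ih =>
    rw [Finset.noncommProd_cons, Perm.mul_apply]
    rcases Finset.mem_cons.1 hc with rfl | hc'
    · rw [noncommProd_apply_eq_self f s _ x fun d hd =>
        hfix d (Finset.mem_cons_of_mem hd) (fun h => ha (h ▸ hd))]
    · have h1 : s.noncommProd f (comm.mono (by intro y hy; simp [hy])) x = f c x :=
        ih (hdisj.mono (by intro y hy; simp [hy])) _ hc'
          fun d hd hdc => hfix d (Finset.mem_cons_of_mem hd) hdc
      rw [h1]
      rcases eq_or_ne (f c x) x with hcx | hcx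
      · rw [hcx]; exact hfix a (Finset.mem_cons_self a s) (fun h => ha (h ▸ hc'))
      · have hd : (f a).Disjoint (f c) :=
          hdisj (by simp) (by simp [hc']) (fun h => ha (h ▸ hc'))
        rcases hd (f c x) with h | h
        · exact h
        · exact absurd ((f c).injective h) hcx

end beta


/-- Product of a chain of swaps with pairwise distinct points. -/
theorem swapChain_exists (u v : ℕ → α) (k : ℕ)
    (hu : ∀ i < k, ∀ j < k, u i = u j → i = j)
    (hv : ∀ i < k, ∀ j < k, v i = v j → i = j)
    (huv : ∀ i < k, ∀ j < k, u i ≠ v j) :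
    ∃ T : Perm α, (∀ i < k, T (u i) = v i) ∧ (∀ i < k, T (v i) = u i) ∧
      (∀ y, (∀ i < k, y ≠ u i ∧ y ≠ v i) → T y = y) ∧ Perm.sign T = (-1) ^ k := by
  induction k with
  | zero => exact ⟨1, by simp, by simp, by simp, by simp⟩
  | succ k ih =>
    obtain ⟨T, hT1, hT2, hT3, hT4⟩ :=
      ih (fun i hi j hj => hu i (hi.trans k.lt_succ_self) j (hj.trans k.lt_succ_self))
        (fun i hi j hj => hv i (hi.trans k.lt_succ_self) j (hj.trans k.lt_succ_self))
        (fun i hi j hj => huv i (hi.trans k.lt_succ_self) j (hj.trans k.lt_succ_self))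
    refine ⟨T * Equiv.swap (u k) (v k), ?_, ?_, ?_, ?_⟩
    · intro i hi
      rcases eq_or_ne i k with rfl | hik
      · simp only [Perm.mul_apply, Equiv.swap_apply_left]
        refine hT3 _ fun j hj => ⟨?_, ?_⟩
        · exact fun h => huv j (hj.trans i.lt_succ_self) i i.lt_succ_self h.symm
        · exact fun h => absurd (hv i i.lt_succ_self j (hj.trans i.lt_succ_self) h) (by omega)
      · have hi' : i < k := by omega
        have h1 : u i ≠ u k := fun h => absurd (hu i hi k k.lt_succ_self h) hik
        have h2 : u i ≠ v k := huv i hi k k.lt_succ_self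
        simp only [Perm.mul_apply, Equiv.swap_apply_of_ne_of_ne h1 h2]
        exact hT1 i hi'
    · intro i hi
      rcases eq_or_ne i k with rfl | hik
      · simp only [Perm.mul_apply, Equiv.swap_apply_right]
        refine hT3 _ fun j hj => ⟨?_, ?_⟩
        · exact fun h => absurd (hu i i.lt_succ_self j (hj.trans i.lt_succ_self) h) (by omega)
        · exact fun h => huv i i.lt_succ_self j (hj.trans i.lt_succ_self) h
      · have hi' : i < k := by omega
        have h1 : v i ≠ u k := fun h => huv k k.lt_succ_self i hi h.symm
        have h2 : v i ≠ v k := fun h => absurd (hv i hi k k.lt_succ_self h) hik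
        simp only [Perm.mul_apply, Equiv.swap_apply_of_ne_of_ne h1 h2]
        exact hT2 i hi'
    · intro y hy
      have h1 := (hy k k.lt_succ_self).1
      have h2 := (hy k k.lt_succ_self).2
      simp only [Perm.mul_apply, Equiv.swap_apply_of_ne_of_ne h1 h2]
      exact hT3 y fun j hj => hy j (hj.trans k.lt_succ_self)
    · rw [map_mul, hT4, Perm.sign_swap (huv k k.lt_succ_self k k.lt_succ_self), pow_succ]

/-- Reversal of a single cycle: a permutation `r`, supported on the cycle's support,
conjugating the cycle to its inverse, with sign `(-1) ^ ((m - 1) / 2)`. -/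
theorem cycle_reversal {c : Perm α} (hc : c.IsCycle) :
    ∃ r : Perm α, (∀ x, x ∉ c.support → r x = x) ∧ r * c * r⁻¹ = c⁻¹ ∧
      Perm.sign r = (-1) ^ ((c.support.card - 1) / 2) := by
  classical
  obtain ⟨a, ha⟩ := hc.nonempty_support
  set m := c.support.card with hm
  have hm2 : 2 ≤ m := hc.two_le_card_support
  have hco : c.IsCycleOn (c.support : Set α) := by
    rw [coe_support_eq_set_support]; exact hc.isCycleOn
  have hcong : ∀ p q : ℕ, p % m = q % m → (c ^ p) a = (c ^ q) a := by
    intro p q h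
    exact (hco.pow_apply_eq_pow_apply ha).2 h
  have hinj : ∀ p < m, ∀ q < m, (c ^ p) a = (c ^ q) a → p = q := by
    intro p hp q hq h
    have := (hco.pow_apply_eq_pow_apply ha).1 h
    rw [Nat.ModEq, Nat.mod_eq_of_lt hp, Nat.mod_eq_of_lt hq] at this
    exact this
  set k := (m - 1) / 2 with hk
  set u : ℕ → α := fun i => (c ^ (i + 1)) a with hu_def
  set v : ℕ → α := fun i => (c ^ (m - 1 - i)) a with hv_def
  obtain ⟨T, hT1, hT2, hT3, hT4⟩ := swapChain_exists u v k
    (fun i hi j hj h => by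
      have := hinj (i+1) (by omega) (j+1) (by omega) h; omega)
    (fun i hi j hj h => by
      have := hinj (m-1-i) (by omega) (m-1-j) (by omega) h; omega)
    (fun i hi j hj h => by
      have := hinj (i+1) (by omega) (m-1-j) (by omega) h; omega)
  -- T fixes a
  have hT0 : T a = a := by
    refine hT3 a fun i hi => ⟨?_, ?_⟩
    · intro h
      have : (c ^ 0) a = (c ^ (i+1)) a := by simpa using h
      have := hinj 0 (by omega) (i+1) (by omega) this; omega
    · intro h
      have : (c ^ 0) a = (c ^ (m-1-i)) a := by simpa using h
      have := hinj 0 (by omega) (m-1-i) (by omega) this; omega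
  -- main evaluation
  have hTj : ∀ j, 1 ≤ j → j < m → T ((c ^ j) a) = (c ^ (m - j)) a := by
    intro j hj1 hjm
    by_cases hjk : j ≤ k
    · have hik : j - 1 < k := by omega
      have e1 : j - 1 + 1 = j := by omega
      have e2 : m - 1 - (j - 1) = m - j := by omega
      have h1 : u (j-1) = (c ^ j) a := by
        show (c ^ (j - 1 + 1)) a = (c ^ j) a; rw [e1]
      have h2 : v (j-1) = (c ^ (m - j)) a := by
        show (c ^ (m - 1 - (j - 1))) a = (c ^ (m - j)) a; rw [e2]
      rw [← h1, ← h2]; exact hT1 _ hik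
    · by_cases hjk2 : m - k ≤ j
      · have hik : m - 1 - j < k := by omega
        have e1 : m - 1 - (m - 1 - j) = j := by omega
        have e2 : m - 1 - j + 1 = m - j := by omega
        have h1 : v (m-1-j) = (c ^ j) a := by
          show (c ^ (m - 1 - (m - 1 - j))) a = (c ^ j) a; rw [e1]
        have h2 : u (m-1-j) = (c ^ (m - j)) a := by
          show (c ^ (m - 1 - j + 1)) a = (c ^ (m - j)) a; rw [e2]
        rw [← h1, ← h2]; exact hT2 _ hik
      · -- middle case : 2*j = m
        have h2j : 2 * j = m := by omega
        have hfix : T ((c ^ j) a) = (c ^ j) a := by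
          refine hT3 _ fun i hi => ⟨?_, ?_⟩
          · intro h
            have := hinj j hjm (i+1) (by omega) h; omega
          · intro h
            have := hinj j hjm (m-1-i) (by omega) h; omega
        have e1 : m - j = j := by omega
        rw [hfix, e1]
  have hfixout : ∀ x, x ∉ c.support → T x = x := by
    intro x hx
    refine hT3 x fun i hi => ⟨?_, ?_⟩
    · intro h; exact hx (h ▸ pow_apply_mem_support.2 ha)
    · intro h; exact hx (h ▸ pow_apply_mem_support.2 ha)
  refine ⟨T, hfixout, ?_, hT4⟩
  -- conjugation
  rw [mul_inv_eq_iff_eq_mul]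
  ext x
  simp only [Perm.mul_apply]
  by_cases hx : x ∈ c.support
  · obtain ⟨j, hj, rfl⟩ := hco.exists_pow_eq ha hx
    rw [← hm] at hj
    have hcm : (c ^ m) a = a := by
      have := hco.pow_card_apply ha
      rwa [← hm] at this
    rcases Nat.eq_or_lt_of_le (Nat.succ_le_of_lt hj) with hj1 | hj1
    · -- j + 1 = m
      have e : j + 1 = m := hj1
      have h1 : c ((c ^ j) a) = a := by
        rw [← Perm.mul_apply, ← pow_succ', e, hcm]
      have h2 : T ((c ^ j) a) = c a := by
        rw [hTj j (by omega) hj, show m - j = 1 by omega, pow_one]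
      rw [h1, hT0, h2, Perm.inv_apply_self]
    · -- j + 1 < m
      have h1 : c ((c ^ j) a) = (c ^ (j+1)) a := by
        rw [← Perm.mul_apply, ← pow_succ']
      rw [h1]
      rcases Nat.eq_zero_or_pos j with rfl | hj0
      · -- j = 0 : T a = a, LHS = T (c a) = c^(m-1) a, RHS = c⁻¹ a
        simp only [pow_zero, Perm.one_apply] at *
        rw [hTj 1 le_rfl (by omega), hT0]
        apply c.injective
        rw [Perm.apply_inv_self, ← Perm.mul_apply, ← pow_succ']
        have e : m - 1 + 1 = m := by omega
        rw [e, hcm]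
      · rw [hTj (j+1) (by omega) hj1, hTj j hj0 hj]
        apply c.injective
        rw [Perm.apply_inv_self, ← Perm.mul_apply, ← pow_succ']
        have e : m - (j + 1) + 1 = m - j := by omega
        rw [e]
  · rw [hfixout x hx]
    have hcx : c x = x := notMem_support.1 hx
    have hcix : c⁻¹ x = x := by
      apply c.injective; rw [Perm.apply_inv_self, hcx]
    rw [hcx, hfixout x hx, hcix]

/-- Every permutation is conjugate to its inverse via a permutation whose sign
is `(-1) ^ ∑ (cᵢ - 1)/2`. -/
theorem exists_conj_inv (g : Perm α) :
    ∃ σ : Perm α, σ * g * σ⁻¹ = g⁻¹ ∧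
      Perm.sign σ = (-1) ^ ((g.cycleType.map fun m => (m - 1) / 2).sum) := by
  classical
  -- choose a reversal for each cycle factor
  have hch : ∀ c : Perm α, ∃ r : Perm α, c.IsCycle →
      ((∀ x, x ∉ c.support → r x = x) ∧ r * c * r⁻¹ = c⁻¹ ∧
        Perm.sign r = (-1) ^ ((c.support.card - 1) / 2)) := by
    intro c
    by_cases hc : c.IsCycle
    · obtain ⟨r, hr⟩ := cycle_reversal hc
      exact ⟨r, fun _ => hr⟩
    · exact ⟨1, fun h => absurd h hc⟩
  choose r hr using hch
  have hcyc : ∀ c ∈ g.cycleFactorsFinset, c.IsCycle := fun c hc =>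
    (mem_cycleFactorsFinset_iff.mp hc).1
  have hsupp : ∀ c ∈ g.cycleFactorsFinset, ∀ x, x ∉ c.support → r c x = x :=
    fun c hc => (hr c (hcyc c hc)).1
  have hrsupp : ∀ c ∈ g.cycleFactorsFinset, (r c).support ⊆ c.support := by
    intro c hc x hx
    by_contra h
    exact (mem_support.1 hx) (hsupp c hc x h)
  have hdisj : (g.cycleFactorsFinset : Set (Perm α)).Pairwise
      fun a b => (r a).Disjoint (r b) := by
    intro a hai b hbi hab
    rw [disjoint_iff_disjoint_support]
    exact Finset.disjoint_of_subset_left (hrsupp a hai) <|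
      Finset.disjoint_of_subset_right (hrsupp b hbi) <|
        disjoint_iff_disjoint_support.1 (g.cycleFactorsFinset_pairwise_disjoint hai hbi hab)
  have comm : (g.cycleFactorsFinset : Set (Perm α)).Pairwise (Function.onFun Commute r) :=
    hdisj.mono' fun a b h => h.commute
  set σ := g.cycleFactorsFinset.noncommProd r comm with hσ
  have hfixall : ∀ x, x ∉ g.support → σ x = x := by
    intro x hx
    refine noncommProd_apply_eq_self r _ comm x fun c hc => hsupp c hc x fun hxc => ?_
    exact hx (mem_cycleFactorsFinset_support_le hc hxc)
  have hval : ∀ c ∈ g.cycleFactorsFinset, ∀ x ∈ c.support, σ x = r c x := by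
    intro c hc x hx
    refine noncommProd_apply_of_mem r _ hdisj comm x c hc fun d hd hdc => ?_
    refine hsupp d hd x fun hxd => ?_
    have := disjoint_iff_disjoint_support.1 (g.cycleFactorsFinset_pairwise_disjoint
      (by exact hd) (by exact hc) hdc)
    exact (Finset.disjoint_left.1 this) hxd hx
  refine ⟨σ, ?_, ?_⟩
  · rw [mul_inv_eq_iff_eq_mul]
    ext x
    simp only [Perm.mul_apply]
    by_cases hx : x ∈ g.support
    · set c := g.cycleOf x with hcdef
      have hc : c ∈ g.cycleFactorsFinset := cycleOf_mem_cycleFactorsFinset_iff.2 hx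
      have hxc : x ∈ c.support := by
        rw [hcdef, mem_support_cycleOf_iff]
        exact ⟨SameCycle.refl g x, hx⟩
      have hgc : ∀ y ∈ c.support, c y = g y := (mem_cycleFactorsFinset_iff.mp hc).2
      have hgx : g x ∈ c.support := (mem_cycleFactorsFinset_support hc x).2 hxc
      have hrc : ∀ y ∈ c.support, r c y ∈ c.support := by
        intro y hy
        by_contra h
        have h2 : r c (r c y) = r c y := hsupp c hc _ h
        have := (r c).injective h2
        rw [this] at h
        exact h hy
      have hconj : r c * c * (r c)⁻¹ = c⁻¹ := (hr c (hcyc c hc)).2.1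
      have hrcc : ∀ y, r c (c y) = c⁻¹ (r c y) := by
        intro y
        have := congrArg (fun p => p (r c y)) hconj
        simpa [Perm.mul_apply] using this
      have hginv : ∀ y ∈ c.support, g⁻¹ y = c⁻¹ y := by
        intro y hy
        have h1 : c⁻¹ y ∈ c.support := by
          rw [← Perm.support_inv c] at hy ⊢
          exact Perm.apply_mem_support.2 hy
        have := hgc _ h1
        rw [Perm.apply_inv_self] at this
        apply g.injective
        rw [Perm.apply_inv_self]
        exact this
      rw [hval c hc _ hgx, hval c hc x hxc, ← hgc x hxc, hrcc x,
        hginv _ (hrc x hxc)]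
    · have hgx : g x = x := notMem_support.1 hx
      have hgix : g⁻¹ x = x := by apply g.injective; rw [Perm.apply_inv_self, hgx]
      rw [hgx, hfixall x hx, hgix]
  · rw [hσ, Finset.map_noncommProd]
    rw [Finset.noncommProd_eq_prod]
    have h1 : ∀ c ∈ g.cycleFactorsFinset,
        Perm.sign (r c) = (-1) ^ ((c.support.card - 1) / 2) := fun c hc =>
      (hr c (hcyc c hc)).2.2
    rw [Finset.prod_congr rfl h1, Finset.prod_pow_eq_pow_sum]
    congr 1
    rw [cycleType_def, Multiset.map_map, Finset.sum]
    rfl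

/-- Under the distinct-odd-cycle-type conditions, every permutation commuting with `g`
is even. -/
theorem sign_eq_one_of_commute (g τ : Perm α)
    (hnodup : g.cycleType.Nodup) (hodd : ∀ m ∈ g.cycleType, Odd m)
    (hfix1 : g.supportᶜ.card ≤ 1) (hτ : Commute τ g) : Perm.sign τ = 1 := by
  classical
  have hg : τ * g * τ⁻¹ = g := by rw [hτ.eq, mul_inv_cancel_right]
  -- τ commutes with each cycle factor
  have hcomm : ∀ c ∈ g.cycleFactorsFinset, Commute τ c := by
    intro c hc
    have hmem : τ * c * τ⁻¹ ∈ g.cycleFactorsFinset := by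
      have := (mem_cycleFactorsFinset_conj g τ c).2 hc
      rwa [hg] at this
    have hcard : (τ * c * τ⁻¹).support.card = c.support.card := by
      rw [support_conj, Finset.card_map]
    have heq : τ * c * τ⁻¹ = c := by
      have hinj := Multiset.inj_on_of_nodup_map (f := Finset.card ∘ Perm.support)
        (s := g.cycleFactorsFinset.val) (by rwa [← cycleType_def])
      exact hinj _ hmem _ hc hcard
    have h2 : τ * c = c * τ := by
      have h3 := congrArg (fun p => p * τ) heq
      simpa [mul_assoc] using h3
    exact h2
  rw [Equiv.Perm.IsCycle.forall_commute_iff] at hcomm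
  have H : ∀ c : Perm α, ∃ w : Perm α, c ∈ g.cycleFactorsFinset →
      ((∀ x ∈ c.support, w x = τ x) ∧ (∀ x ∉ c.support, w x = x) ∧
        w ∈ Subgroup.zpowers c) := by
    intro c
    by_cases hc : c ∈ g.cycleFactorsFinset
    · obtain ⟨hsupp, hz⟩ := hcomm c hc
      refine ⟨ofSubtype (τ.subtypePerm hsupp), fun _ => ⟨?_, ?_, hz⟩⟩
      · intro x hx
        rw [ofSubtype_apply_of_mem _ hx, subtypePerm_apply]
      · intro x hx
        exact ofSubtype_apply_of_not_mem _ hx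
    · exact ⟨1, fun h => absurd h hc⟩
  choose w hw using H
  have hwsupp : ∀ c ∈ g.cycleFactorsFinset, (w c).support ⊆ c.support := by
    intro c hc
    obtain ⟨k, hk⟩ := Subgroup.mem_zpowers_iff.1 (hw c hc).2.2
    rw [← hk]
    exact support_zpow_le c k
  have hdisj : (g.cycleFactorsFinset : Set (Perm α)).Pairwise
      fun a b => (w a).Disjoint (w b) := by
    intro a hai b hbi hab
    rw [disjoint_iff_disjoint_support]
    exact Finset.disjoint_of_subset_left (hwsupp a hai) <|
      Finset.disjoint_of_subset_right (hwsupp b hbi) <|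
        disjoint_iff_disjoint_support.1 (g.cycleFactorsFinset_pairwise_disjoint hai hbi hab)
  have comm : (g.cycleFactorsFinset : Set (Perm α)).Pairwise (Function.onFun Commute w) :=
    hdisj.mono' fun a b h => h.commute
  have hτeq : τ = g.cycleFactorsFinset.noncommProd w comm := by
    ext x
    by_cases hx : x ∈ g.support
    · have hc : g.cycleOf x ∈ g.cycleFactorsFinset := cycleOf_mem_cycleFactorsFinset_iff.2 hx
      have hxc : x ∈ (g.cycleOf x).support := by
        rw [mem_support_cycleOf_iff]; exact ⟨SameCycle.refl g x, hx⟩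
      rw [noncommProd_apply_of_mem w _ hdisj comm x _ hc ?_]
      · exact ((hw _ hc).1 x hxc).symm
      · intro d hd hdc
        refine (hw d hd).2.1 x fun hxd => ?_
        have := disjoint_iff_disjoint_support.1
          (g.cycleFactorsFinset_pairwise_disjoint (by exact hd) (by exact hc) hdc)
        exact (Finset.disjoint_left.1 this) hxd hxc
    · have h1 : g.cycleFactorsFinset.noncommProd w comm x = x := by
        refine noncommProd_apply_eq_self w _ comm x fun c hc => (hw c hc).2.1 x fun hxc => ?_
        exact hx (mem_cycleFactorsFinset_support_le hc hxc)
      rw [h1]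
      -- τ fixes the (at most one) fixed point
      have hτx : g (τ x) = τ x := by
        have h2 : g x = x := notMem_support.1 hx
        have := congrArg (fun p => p x) hτ.eq
        simpa [Perm.mul_apply, h2] using this.symm
      have hmem1 : x ∈ g.supportᶜ := Finset.mem_compl.2 hx
      have hmem2 : τ x ∈ g.supportᶜ := Finset.mem_compl.2 (by simpa [mem_support] using hτx)
      exact Finset.card_le_one.1 hfix1 _ hmem2 _ hmem1
  rw [hτeq, Finset.map_noncommProd, Finset.noncommProd_eq_prod]
  refine Finset.prod_eq_one fun c hc => ?_
  obtain ⟨k, hk⟩ := Subgroup.mem_zpowers_iff.1 (hw c hc).2.2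
  have hsign : Perm.sign c = 1 := by
    have hcyc : c.IsCycle := (mem_cycleFactorsFinset_iff.mp hc).1
    have hcard : Odd c.support.card := hodd _ (by
      rw [cycleType_def]
      exact Multiset.mem_map_of_mem _ hc)
    rw [hcyc.sign, hcard.neg_one_pow, neg_neg]
  rw [← hk, map_zpow, hsign, one_zpow]

theorem exists_odd_commute_of_even_cycle (g : Perm α) (h : ∃ m ∈ g.cycleType, Even m) :
    ∃ τ : Perm α, Commute τ g ∧ Perm.sign τ = -1 := by
  obtain ⟨m, hm, hme⟩ := h
  rw [cycleType_def, Multiset.mem_map] at hm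
  obtain ⟨c, hc, hcard⟩ := hm
  refine ⟨c, self_mem_cycle_factors_commute hc, ?_⟩
  have hcyc : c.IsCycle := (mem_cycleFactorsFinset_iff.mp hc).1
  rw [hcyc.sign]
  rw [show (Finset.card ∘ Perm.support) c = c.support.card from rfl] at hcard
  rw [hcard, hme.neg_one_pow]

theorem exists_odd_commute_of_fixed (g : Perm α) (h : 2 ≤ g.supportᶜ.card) :
    ∃ τ : Perm α, Commute τ g ∧ Perm.sign τ = -1 := by
  obtain ⟨a, hha, b, hhb, hab⟩ := Finset.one_lt_card.1 h
  rw [Finset.mem_compl, notMem_support] at hha hhb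
  refine ⟨Equiv.swap a b, ?_, Perm.sign_swap hab⟩
  refine Perm.Disjoint.commute fun x => ?_
  by_cases hxa : x = a
  · exact Or.inr (hxa ▸ hha)
  by_cases hxb : x = b
  · exact Or.inr (hxb ▸ hhb)
  · exact Or.inl (Equiv.swap_apply_of_ne_of_ne hxa hxb)

theorem exists_odd_commute_of_two_odd_cycles (g : Perm α) (m : ℕ) (hm : Odd m)
    (hcount : 2 ≤ g.cycleType.count m) :
    ∃ τ : Perm α, Commute τ g ∧ Perm.sign τ = -1 := by
  classical
  have hcnt : g.cycleType.count m =
      (g.cycleFactorsFinset.filter fun c => m = c.support.card).card := by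
    rw [cycleType_def, Multiset.count_map]
    rfl
  rw [hcnt] at hcount
  obtain ⟨c₁, hc1, c₂, hc2, hne⟩ := Finset.one_lt_card.1 hcount
  rw [Finset.mem_filter] at hc1 hc2
  obtain ⟨hc1f, hm1⟩ := hc1
  obtain ⟨hc2f, hm2⟩ := hc2
  have hcyc1 : c₁.IsCycle := (mem_cycleFactorsFinset_iff.mp hc1f).1
  have hcyc2 : c₂.IsCycle := (mem_cycleFactorsFinset_iff.mp hc2f).1
  have hdisj : _root_.Disjoint c₁.support c₂.support :=
    disjoint_iff_disjoint_support.1 (g.cycleFactorsFinset_pairwise_disjoint hc1f hc2f hne)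
  obtain ⟨π, hπ⟩ := isConj_iff.1 (hcyc1.isConj hcyc2 (by rw [← hm1, ← hm2]))
  have hπp : ∀ y, c₂ (π y) = π (c₁ y) := by
    intro y
    have := congrArg (fun p => p (π y)) hπ
    simpa [Perm.mul_apply] using this.symm
  have hsupp2 : c₂.support = c₁.support.map π.toEmbedding := by
    rw [← hπ, support_conj]
  have hπmem : ∀ x ∈ c₁.support, π x ∈ c₂.support := by
    intro x hx
    rw [hsupp2]
    exact Finset.mem_map_of_mem _ hx
  have hπinv : ∀ y ∈ c₂.support, π⁻¹ y ∈ c₁.support := by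
    intro y hy
    rw [hsupp2, Finset.mem_map] at hy
    obtain ⟨x, hx, rfl⟩ := hy
    simpa using hx
  obtain ⟨a, ha⟩ := hcyc1.nonempty_support
  have hco : c₁.IsCycleOn (c₁.support : Set α) := by
    rw [coe_support_eq_set_support]; exact hcyc1.isCycleOn
  have hinj : ∀ p < m, ∀ q < m, (c₁ ^ p) a = (c₁ ^ q) a → p = q := by
    intro p hp q hq hpq
    have := (hco.pow_apply_eq_pow_apply ha).1 hpq
    rwa [Nat.ModEq, ← hm1, Nat.mod_eq_of_lt hp, Nat.mod_eq_of_lt hq] at this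
  set u : ℕ → α := fun i => (c₁ ^ i) a with hu_def
  set v : ℕ → α := fun i => π ((c₁ ^ i) a) with hv_def
  have humem : ∀ i, u i ∈ c₁.support := fun i => pow_apply_mem_support.2 ha
  have hvmem : ∀ i, v i ∈ c₂.support := fun i => hπmem _ (pow_apply_mem_support.2 ha)
  obtain ⟨T, hT1, hT2, hT3, hT4⟩ := swapChain_exists u v m
    (fun i hi j hj h => hinj i hi j hj h)
    (fun i hi j hj h => hinj i hi j hj (π.injective h))
    (fun i hi j hj h => (Finset.disjoint_left.1 hdisj) (humem i) (h ▸ hvmem j))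
  have hsurj : ∀ x ∈ c₁.support, ∃ i < m, u i = x := by
    intro x hx
    obtain ⟨i, hi, hix⟩ := hco.exists_pow_eq ha hx
    exact ⟨i, by rwa [hm1], hix⟩
  have Tp1 : ∀ x ∈ c₁.support, T x = π x := by
    intro x hx
    obtain ⟨i, hi, rfl⟩ := hsurj x hx
    exact hT1 i hi
  have Tp2 : ∀ y ∈ c₂.support, T y = π⁻¹ y := by
    intro y hy
    obtain ⟨i, hi, hix⟩ := hsurj _ (hπinv y hy)
    have hvy : v i = y := by
      show π ((c₁ ^ i) a) = y
      rw [show (c₁ ^ i) a = π⁻¹ y from hix, Perm.apply_inv_self]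
    have h2 := hT2 i hi
    rw [hvy] at h2
    rw [h2, hix]
  have Tp3 : ∀ y, y ∉ c₁.support → y ∉ c₂.support → T y = y := by
    intro y h1 h2
    exact hT3 y fun i hi => ⟨fun h => h1 (h ▸ humem i), fun h => h2 (h ▸ hvmem i)⟩
  refine ⟨T, ?_, by rw [hT4, hm.neg_one_pow]⟩
  rw [Commute, SemiconjBy]
  ext x
  simp only [Perm.mul_apply]
  have hgc1 : ∀ y ∈ c₁.support, c₁ y = g y := (mem_cycleFactorsFinset_iff.mp hc1f).2
  have hgc2 : ∀ y ∈ c₂.support, c₂ y = g y := (mem_cycleFactorsFinset_iff.mp hc2f).2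
  by_cases hx1 : x ∈ c₁.support
  · have hgx : g x ∈ c₁.support := (mem_cycleFactorsFinset_support hc1f x).2 hx1
    have hπx : π x ∈ c₂.support := hπmem x hx1
    rw [Tp1 _ hgx, Tp1 _ hx1, ← hgc1 x hx1, ← hgc2 _ hπx, hπp]
  · by_cases hx2 : x ∈ c₂.support
    · have hgx : g x ∈ c₂.support := (mem_cycleFactorsFinset_support hc2f x).2 hx2
      have hπx : π⁻¹ x ∈ c₁.support := hπinv x hx2
      rw [Tp2 _ hgx, Tp2 _ hx2, ← hgc2 x hx2, ← hgc1 _ hπx]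
      apply π.injective
      rw [Perm.apply_inv_self, ← hπp, Perm.apply_inv_self]
    · have hgx1 : g x ∉ c₁.support := fun h => hx1 ((mem_cycleFactorsFinset_support hc1f x).1 h)
      have hgx2 : g x ∉ c₂.support := fun h => hx2 ((mem_cycleFactorsFinset_support hc2f x).1 h)
      rw [Tp3 _ hgx1 hgx2, Tp3 _ hx1 hx2]

theorem exists_even_conj_of_odd_commute (g : Perm α)
    (h : ∃ τ : Perm α, Commute τ g ∧ Perm.sign τ = -1) :
    ∃ σ : Perm α, Perm.sign σ = 1 ∧ σ * g * σ⁻¹ = g⁻¹ := by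
  obtain ⟨τ, hτc, hτs⟩ := h
  obtain ⟨σ₀, hc, hs⟩ := exists_conj_inv g
  have hτg : τ * g * τ⁻¹ = g := by rw [hτc.eq, mul_inv_cancel_right]
  rcases Int.units_eq_one_or (Perm.sign σ₀) with h1 | h1
  · exact ⟨σ₀, h1, hc⟩
  · refine ⟨σ₀ * τ, by rw [map_mul, h1, hτs]; decide, ?_⟩
    calc σ₀ * τ * g * (σ₀ * τ)⁻¹ = σ₀ * (τ * g * τ⁻¹) * σ₀⁻¹ := by
          rw [mul_inv_rev]; group
      _ = σ₀ * g * σ₀⁻¹ := by rw [hτg]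
      _ = g⁻¹ := hc

/-- Lemma 3.6: an element `g ∈ A_n` is real in `A_n` (conjugate in `A_n` to `g⁻¹`)
iff (1) `g` has a cycle of even length, or (2) `g` has two cycles of equal odd length
(counting fixed points as 1-cycles), or (3) all cycles of `g` (including fixed points)
have pairwise distinct odd lengths `cᵢ` and `∑ (cᵢ - 1)/2` is even.
Here `cycleType` lists the cycle lengths `≥ 2`, and `n - (cycleType).sum` is the
number of fixed points (the 1-cycles). -/
theorem real_in_alternatingGroup_iff (n : ℕ) (hn : 1 ≤ n)
    (g : alternatingGroup (Fin n)) :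
    IsConj g g⁻¹ ↔
      ((∃ c ∈ (g : Perm (Fin n)).cycleType, Even c) ∨
       ((∃ c, Odd c ∧ 2 ≤ ((g : Perm (Fin n)).cycleType.count c)) ∨
          2 ≤ n - ((g : Perm (Fin n)).cycleType.sum)) ∨
       ((g : Perm (Fin n)).cycleType.Nodup ∧
        (∀ c ∈ (g : Perm (Fin n)).cycleType, Odd c) ∧
        n - ((g : Perm (Fin n)).cycleType.sum) ≤ 1 ∧
        Even (((g : Perm (Fin n)).cycleType.map fun c => (c - 1) / 2).sum))) := by
  classical
  set G : Perm (Fin n) := (g : Perm (Fin n)) with hG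
  have hfixcard : G.supportᶜ.card = n - G.cycleType.sum := by
    rw [Finset.card_compl, sum_cycleType, Fintype.card_fin]
  have key : IsConj g g⁻¹ ↔ ∃ σ : Perm (Fin n), Perm.sign σ = 1 ∧ σ * G * σ⁻¹ = G⁻¹ := by
    constructor
    · intro h
      obtain ⟨c, hc⟩ := isConj_iff.1 h
      refine ⟨(c : Perm (Fin n)), mem_alternatingGroup.1 c.2, ?_⟩
      have := congrArg (Subtype.val) hc
      simpa using this
    · rintro ⟨σ, hs, hc⟩
      rw [isConj_iff]
      refine ⟨⟨σ, mem_alternatingGroup.2 hs⟩, ?_⟩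
      apply Subtype.ext
      simpa using hc
  rw [key]
  constructor
  · rintro ⟨σ, hσs, hσc⟩
    by_cases h1 : ∃ m ∈ G.cycleType, Even m
    · exact Or.inl h1
    by_cases h2a : ∃ m, Odd m ∧ 2 ≤ G.cycleType.count m
    · exact Or.inr (Or.inl (Or.inl h2a))
    by_cases h2b : 2 ≤ n - G.cycleType.sum
    · exact Or.inr (Or.inl (Or.inr h2b))
    push_neg at h1 h2a
    have hodd : ∀ m ∈ G.cycleType, Odd m := fun m hm =>
      Nat.not_even_iff_odd.1 (h1 m hm)
    have hnodup : G.cycleType.Nodup := by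
      rw [Multiset.nodup_iff_count_le_one]
      intro m
      by_contra hcnt
      push_neg at hcnt
      have hmem : m ∈ G.cycleType := by
        rw [← Multiset.count_pos]; omega
      have := h2a m (hodd m hmem); omega
    have hf1 : n - G.cycleType.sum ≤ 1 := by omega
    refine Or.inr (Or.inr ⟨hnodup, hodd, hf1, ?_⟩)
    obtain ⟨σ₀, hc₀, hs₀⟩ := exists_conj_inv G
    have hcm : Commute (σ₀⁻¹ * σ) G := by
      have e1 : σ * G = G⁻¹ * σ := by
        rw [← hσc]; group
      have e2 : G * σ₀⁻¹ = σ₀⁻¹ * G⁻¹ := by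
        have : σ₀⁻¹ * (σ₀ * G * σ₀⁻¹) = σ₀⁻¹ * G⁻¹ := by rw [hc₀]
        rw [← this]; group
      show σ₀⁻¹ * σ * G = G * (σ₀⁻¹ * σ)
      rw [mul_assoc, e1, ← mul_assoc, ← mul_assoc, ← e2, mul_assoc]
    have hone : Perm.sign (σ₀⁻¹ * σ) = 1 :=
      sign_eq_one_of_commute G _ hnodup hodd (by omega) hcm
    rw [map_mul, map_inv, hσs, mul_one] at hone
    have hs₀1 : Perm.sign σ₀ = 1 := by
      have := congrArg (fun u => u⁻¹) hone
      simpa using this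
    rw [hs₀1] at hs₀
    have hne : (-1 : ℤˣ) ≠ 1 := by decide
    exact (neg_one_pow_eq_one_iff_even hne).1 hs₀.symm
  · intro h
    rcases h with h1 | h2 | h3
    · obtain ⟨σ, hs, hc⟩ := exists_even_conj_of_odd_commute G
        (exists_odd_commute_of_even_cycle G h1)
      exact ⟨σ, hs, hc⟩
    · rcases h2 with h2a | h2b
      · obtain ⟨m, hmo, hmc⟩ := h2a
        obtain ⟨σ, hs, hc⟩ := exists_even_conj_of_odd_commute G
          (exists_odd_commute_of_two_odd_cycles G m hmo hmc)
        exact ⟨σ, hs, hc⟩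
      · obtain ⟨σ, hs, hc⟩ := exists_even_conj_of_odd_commute G
          (exists_odd_commute_of_fixed G (by omega))
        exact ⟨σ, hs, hc⟩
    · obtain ⟨hnodup, hodd, hf1, heven⟩ := h3
      obtain ⟨σ₀, hc₀, hs₀⟩ := exists_conj_inv G
      exact ⟨σ₀, by rw [hs₀, heven.neg_one_pow], hc₀⟩
end

section
/- Let g ∈ S_n and write g = g_p · h = h · g_p where g_p, h ∈ ⟨g⟩, g_p is a p-element and the order of h is coprime to p. Then |supp(g_p)| equals the sum of those cycle lengths of g that are divisible by p. -/
open Equiv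

private lemma pow_apply_eq_self_iff_card_dvd {n : ℕ} (g : Perm (Fin n)) (m : ℕ)
    {x : Fin n} (hx : x ∈ g.support) :
    (g ^ m) x = x ↔ (g.cycleOf x).support.card ∣ m := by
  have hx' : g x ≠ x := Perm.mem_support.1 hx
  have hc : (g.cycleOf x).IsCycle := g.isCycle_cycleOf hx'
  have hxc : (g.cycleOf x) x ≠ x := by
    rw [Perm.cycleOf_apply_self]; exact hx'
  rw [← Perm.cycleOf_pow_apply_self, ← hc.pow_eq_one_iff' hxc,
    ← orderOf_dvd_iff_pow_eq_one, hc.orderOf]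

/-- If `g = g_p · h = h · g_p` with `g_p, h ∈ ⟨g⟩`, `g_p` a `p`-element and `|h|`
coprime to `p`, then `|supp(g_p)|` equals the sum of the cycle lengths of `g`
divisible by `p`. -/
theorem support_card_p_part (n : ℕ) (p : ℕ) (hp : p.Prime)
    (g gp h : Perm (Fin n))
    (hgp : gp ∈ Subgroup.zpowers g) (hh : h ∈ Subgroup.zpowers g)
    (hmul : g = gp * h)
    (hppow : ∃ k : ℕ, orderOf gp = p ^ k)
    (hcop : ¬ p ∣ orderOf h) :
    gp.support.card = (g.cycleType.filter fun c => p ∣ c).sum := by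
  classical
  obtain ⟨k, hk⟩ := hppow
  obtain ⟨m, hm⟩ := mem_powers_iff_mem_zpowers.2 hgp
  obtain ⟨m', hm'⟩ := mem_powers_iff_mem_zpowers.2 hh
  subst hm; subst hm'
  set N := orderOf g with hN
  have hN0 : 0 < N := orderOf_pos g
  -- basic arithmetic facts
  have horder : N / N.gcd m = p ^ k := by rw [← orderOf_pow]; exact hk
  have hNsplit : N = p ^ k * N.gcd m := by
    rw [← horder, Nat.div_mul_cancel (Nat.gcd_dvd_left N m)]
  have hgcdm : N.gcd m ∣ m := Nat.gcd_dvd_right N m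
  -- if p ∣ N then p ∤ m
  have hpm : p ∣ N → ¬ p ∣ m := by
    intro hpN hpm
    -- p divides m'
    have hcop' : ¬ p ∣ N / N.gcd m' := by rw [← orderOf_pow]; exact hcop
    have hpm' : p ∣ m' := by
      have h1 : N = (N / N.gcd m') * N.gcd m' :=
        (Nat.div_mul_cancel (Nat.gcd_dvd_left N m')).symm
      have h2 : p ∣ (N / N.gcd m') * N.gcd m' := h1 ▸ hpN
      rcases (Nat.Prime.dvd_mul hp).1 h2 with h3 | h3
      · exact absurd h3 hcop'
      · exact h3.trans (Nat.gcd_dvd_right N m')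
    -- m + m' ≡ 1 [MOD N]
    have hmod : m + m' ≡ 1 [MOD N] := by
      have : g ^ (m + m') = g ^ 1 := by rw [pow_add, pow_one]; exact hmul.symm
      exact (pow_eq_pow_iff_modEq.1 this)
    have hmodp : m + m' ≡ 1 [MOD p] := hmod.of_dvd hpN
    have : (0 : ℕ) ≡ 1 [MOD p] := by
      calc (0 : ℕ) ≡ m + m' [MOD p] := by
            exact ((Nat.modEq_zero_iff_dvd).2 (Nat.dvd_add hpm hpm')).symm
        _ ≡ 1 [MOD p] := hmodp
    have hp1 : p ∣ 1 := (Nat.modEq_zero_iff_dvd).1 this.symm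
    have := Nat.dvd_one.1 hp1
    have := hp.one_lt
    omega
  -- key divisibility characterization
  have hkey : ∀ c : ℕ, c ∣ N → (c ∣ m ↔ ¬ p ∣ c) := by
    intro c hcN
    constructor
    · intro hcm hpc
      exact hpm (hpc.trans hcN) (hpc.trans hcm)
    · intro hpc
      have hcop2 : Nat.Coprime c (p ^ k) :=
        ((Nat.Prime.coprime_iff_not_dvd hp).2 hpc).symm.pow_right k
      have : c ∣ p ^ k * N.gcd m := hNsplit ▸ hcN
      exact (hcop2.dvd_of_dvd_mul_left this).trans hgcdm
  -- pointwise support characterization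
  have hsupp : ∀ x : Fin n, x ∈ (g ^ m).support ↔
      x ∈ g.support ∧ p ∣ (g.cycleOf x).support.card := by
    intro x
    constructor
    · intro hx
      have hxg : x ∈ g.support := Perm.support_pow_le g m hx
      refine ⟨hxg, ?_⟩
      have hne : (g ^ m) x ≠ x := Perm.mem_support.1 hx
      have hndvd : ¬ (g.cycleOf x).support.card ∣ m := fun hd =>
        hne ((pow_apply_eq_self_iff_card_dvd g m hxg).2 hd)
      by_contra hpc
      have hcN : (g.cycleOf x).support.card ∣ N := by
        rw [← (g.isCycle_cycleOf (Perm.mem_support.1 hxg)).orderOf]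
        exact Perm.orderOf_cycleOf_dvd_orderOf g x
      exact hndvd ((hkey _ hcN).2 hpc)
    · rintro ⟨hxg, hpc⟩
      have hcN : (g.cycleOf x).support.card ∣ N := by
        rw [← (g.isCycle_cycleOf (Perm.mem_support.1 hxg)).orderOf]
        exact Perm.orderOf_cycleOf_dvd_orderOf g x
      have hndvd : ¬ (g.cycleOf x).support.card ∣ m := fun hd =>
        ((hkey _ hcN).1 hd) hpc
      rw [Perm.mem_support]
      exact fun hfix => hndvd ((pow_apply_eq_self_iff_card_dvd g m hxg).1 hfix)
  -- counting
  set S := g.cycleFactorsFinset.filter (fun σ => p ∣ σ.support.card) with hS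
  have hsuppeq : (g ^ m).support = S.biUnion Perm.support := by
    ext x
    rw [hsupp x, Finset.mem_biUnion]
    constructor
    · rintro ⟨hxg, hpc⟩
      refine ⟨g.cycleOf x, ?_, ?_⟩
      · rw [hS, Finset.mem_filter]
        exact ⟨Perm.cycleOf_mem_cycleFactorsFinset_iff.2 hxg, hpc⟩
      · rw [Perm.mem_support_cycleOf_iff]
        exact ⟨Perm.SameCycle.refl g x, hxg⟩
    · rintro ⟨σ, hσS, hxσ⟩
      rw [hS, Finset.mem_filter] at hσS
      obtain ⟨hσ, hpσ⟩ := hσS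
      have hxg : x ∈ g.support := Perm.mem_cycleFactorsFinset_support_le hσ hxσ
      have : σ = g.cycleOf x := Perm.cycle_is_cycleOf hxσ hσ
      exact ⟨hxg, this ▸ hpσ⟩
  rw [hsuppeq, Finset.card_biUnion]
  · -- sum equality
    rw [Perm.cycleType, Multiset.filter_map]
    simp only [Finset.sum, hS, Finset.filter_val, Function.comp]
  · intro σ hσ τ hτ hστ
    rw [hS, Finset.mem_coe, Finset.mem_filter] at hσ hτ
    exact Perm.Disjoint.disjoint_support
      ((g.cycleFactorsFinset_pairwise_disjoint hσ.1 hτ.1 hστ))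
end

section
/- Let n ≥ 4 and let g ∈ A_n have |supp(g)| ≤ n/2 − 1. Then there exists an element h ∈ A_n of order exactly 2·(order of g). -/
open Equiv

/-- The "interleaving" permutation on `α × Bool`: its cycles are the cycles of `e`
doubled in length, so it has order `2 * orderOf e` (when `α` is nonempty). -/
def interleave {α : Type*} (e : Perm α) : Perm (α × Bool) where
  toFun p := if p.2 then (e p.1, false) else (p.1, true)
  invFun p := if p.2 then (p.1, false) else (e⁻¹ p.1, true)
  left_inv := by rintro ⟨x, b⟩; cases b <;> simp
  right_inv := by rintro ⟨x, b⟩; cases b <;> simp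

lemma interleave_mul_self {α : Type*} (e : Perm α) :
    interleave e * interleave e = Equiv.prodCongr e (Equiv.refl Bool) := by
  ext ⟨x, b⟩ : 1
  cases b <;> simp [interleave, Perm.mul_apply]

lemma prodCongr_refl_pow {α : Type*} (e : Perm α) (j : ℕ) :
    (Equiv.prodCongr e (Equiv.refl Bool) : Perm (α × Bool)) ^ j
      = Equiv.prodCongr (e ^ j) (Equiv.refl Bool) := by
  induction j with
  | zero => ext ⟨x, b⟩ : 1 <;> simp
  | succ j ih =>
      rw [pow_succ, pow_succ, ih]
      ext ⟨x, b⟩ : 1 <;> simp [Perm.mul_apply]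

lemma prodCongr_refl_eq_one_iff {α : Type*} [Nonempty α] (e : Perm α) :
    (Equiv.prodCongr e (Equiv.refl Bool) : Perm (α × Bool)) = 1 ↔ e = 1 := by
  constructor
  · intro h
    ext x
    have := Equiv.ext_iff.mp h (x, true)
    simpa using congrArg Prod.fst this
  · rintro rfl
    ext ⟨x, b⟩ : 1 <;> simp

lemma interleave_pow_two_mul {α : Type*} (e : Perm α) (j : ℕ) :
    interleave e ^ (2 * j) = Equiv.prodCongr (e ^ j) (Equiv.refl Bool) := by
  rw [pow_mul, pow_two, interleave_mul_self, prodCongr_refl_pow]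

lemma orderOf_interleave {α : Type*} [Fintype α] [Nonempty α] (e : Perm α) :
    orderOf (interleave e) = 2 * orderOf e := by
  set d := orderOf e with hd
  have hd0 : 0 < d := orderOf_pos e
  have h2d : interleave e ^ (2 * d) = 1 := by
    rw [interleave_pow_two_mul, pow_orderOf_eq_one, prodCongr_refl_eq_one_iff]
  have hdvd : orderOf (interleave e) ∣ 2 * d := orderOf_dvd_of_pow_eq_one h2d
  have hddvd : d ∣ orderOf (interleave e) := by
    have h1 : (interleave e ^ 2) ^ orderOf (interleave e) = 1 := by
      rw [← pow_mul, mul_comm, pow_mul, pow_orderOf_eq_one, one_pow]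
    have h2 : orderOf (interleave e ^ 2) = d := by
      rw [pow_two, interleave_mul_self]
      rw [hd, orderOf_eq_orderOf_iff]
      intro j
      rw [prodCongr_refl_pow, prodCongr_refl_eq_one_iff]
    rw [← h2]
    exact orderOf_dvd_of_pow_eq_one h1
  have hne : interleave e ^ d ≠ 1 := by
    rcases Nat.even_or_odd d with ⟨c, hc⟩ | ⟨c, hc⟩
    · have hc' : d = 2 * c := by omega
      rw [hc', interleave_pow_two_mul]
      rw [Ne, prodCongr_refl_eq_one_iff]
      intro h1
      have := orderOf_dvd_of_pow_eq_one h1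
      rw [← hd] at this
      have hcd : 0 < c := by omega
      have := Nat.le_of_dvd hcd this
      omega
    · intro h1
      have hx := Classical.arbitrary α
      have := Equiv.ext_iff.mp h1 (hx, false)
      rw [hc, pow_succ, Perm.mul_apply, interleave_pow_two_mul] at this
      have h2 : interleave e (hx, false) = (hx, true) := by simp [interleave]
      rw [h2] at this
      simp [Perm.one_apply] at this
  -- finish
  obtain ⟨t, ht⟩ := hddvd
  have hop : 0 < orderOf (interleave e) := orderOf_pos _
  have ht2 : t ∣ 2 := by
    have h3 : d * t ∣ d * 2 := by rw [← ht]; rwa [mul_comm 2 d] at hdvd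
    exact (mul_dvd_mul_iff_left hd0.ne').mp h3
  rcases (Nat.prime_two.eq_one_or_self_of_dvd t ht2) with rfl | rfl
  · rw [mul_one] at ht
    exact absurd (ht ▸ pow_orderOf_eq_one (interleave e)) hne
  · omega


lemma orderOf_subtypePerm_support {α : Type*} [Fintype α] [DecidableEq α] (G : Perm α) :
    orderOf (G.subtypePerm (fun x => Perm.apply_mem_support) :
      Perm {x // x ∈ G.support}) = orderOf G := by
  rw [orderOf_eq_orderOf_iff]
  intro j
  rw [Perm.subtypePerm_pow]
  constructor
  · intro h
    ext x
    by_cases hx : x ∈ G.support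
    · have h2 := Equiv.ext_iff.mp h ⟨x, hx⟩
      rw [Perm.subtypePerm_apply] at h2
      simpa [Subtype.ext_iff] using h2
    · rw [Perm.one_apply]
      exact Perm.notMem_support.mp fun h' => hx (Perm.support_pow_le G j h')
  · intro h
    simp [h]
    ext x
    simp

lemma orderOf_swap' {α : Type*} [DecidableEq α] {a b : α} (h : a ≠ b) :
    orderOf (swap a b) = 2 :=
  orderOf_eq_prime (by rw [pow_two, swap_mul_self]) (by simpa using h)

lemma swap_disjoint_swap {α : Type*} [DecidableEq α] {a b c d : α}
    (hac : a ≠ c) (had : a ≠ d) (hbc : b ≠ c) (hbd : b ≠ d) :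
    (swap a b).Disjoint (swap c d) := by
  intro x
  by_cases h1 : x = c
  · subst h1; left; exact swap_apply_of_ne_of_ne (Ne.symm hac) (Ne.symm hbc)
  by_cases h2 : x = d
  · subst h2; left; exact swap_apply_of_ne_of_ne (Ne.symm had) (Ne.symm hbd)
  · right; exact swap_apply_of_ne_of_ne h1 h2

/-- Lemma 6.6(1) (contrapositive form): if `n ≥ 4` and `g ∈ A_n` satisfies
`|supp(g)| ≤ n/2 - 1`, then `A_n` contains an element of order exactly `2|g|`. -/
theorem exists_double_order_of_small_support (n : ℕ) (hn : 4 ≤ n)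
    (g : alternatingGroup (Fin n))
    (hsupp : ((g : Perm (Fin n)).support.card : ℚ) ≤ (n : ℚ) / 2 - 1) :
    ∃ h : alternatingGroup (Fin n), orderOf h = 2 * orderOf g := by
  classical
  have hg2 : orderOf (g : Perm (Fin n)) = orderOf g := Subgroup.orderOf_coe g
  by_cases hG : (g : Perm (Fin n)) = 1
  · -- trivial case: take a product of two disjoint transpositions
    have hog : orderOf g = 1 := by rw [← hg2, hG, orderOf_one]
    set a : Fin n := ⟨0, by omega⟩ with ha
    set b : Fin n := ⟨1, by omega⟩ with hb
    set c : Fin n := ⟨2, by omega⟩ with hc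
    set d : Fin n := ⟨3, by omega⟩ with hd
    have hab : a ≠ b := Fin.ne_of_val_ne (by simp [ha, hb])
    have hcd : c ≠ d := Fin.ne_of_val_ne (by simp [hc, hd])
    have hac : a ≠ c := Fin.ne_of_val_ne (by simp [ha, hc])
    have had : a ≠ d := Fin.ne_of_val_ne (by simp [ha, hd])
    have hbc : b ≠ c := Fin.ne_of_val_ne (by simp [hb, hc])
    have hbd : b ≠ d := Fin.ne_of_val_ne (by simp [hb, hd])
    have hdis := swap_disjoint_swap hac had hbc hbd
    have hmem : swap a b * swap c d ∈ alternatingGroup (Fin n) := by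
      rw [Perm.mem_alternatingGroup, map_mul, Perm.sign_swap hab, Perm.sign_swap hcd]
      decide
    refine ⟨⟨_, hmem⟩, ?_⟩
    rw [Subgroup.orderOf_mk, hdis.orderOf, orderOf_swap' hab, orderOf_swap' hcd, hog]
    decide
  · -- main case
    set G := (g : Perm (Fin n)) with hGdef
    set s := G.support with hsdef
    set m := s.card with hmdef
    have hm1 : 0 < m := Finset.card_pos.mpr
      (Finset.nonempty_iff_ne_empty.mpr (fun h => hG (Perm.support_eq_empty_iff.mp h)))
    have hmn : 2 * m + 2 ≤ n := by
      have h1 : (2 * (m : ℚ) + 2 : ℚ) ≤ n := by linarith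
      exact_mod_cast h1
    haveI : Nonempty {x // x ∈ s} := Finset.nonempty_coe_sort.mpr (Finset.card_pos.mp hm1)
    set g' : Perm {x // x ∈ s} := G.subtypePerm (fun x => Perm.apply_mem_support)
      with hg'def
    have hg' : orderOf g' = orderOf G := orderOf_subtypePerm_support G
    have hcard : Fintype.card ({x // x ∈ s} × Bool) = 2 * m := by
      simp [Fintype.card_coe, mul_comm]
      rfl
    let e1 : ({x // x ∈ s} × Bool) ≃ Fin (2 * m) := Fintype.equivFinOfCardEq hcard
    let f : ({x // x ∈ s} × Bool) ↪ Fin n :=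
      e1.toEmbedding.trans (Fin.castLEEmb (by omega))
    have hfval : ∀ p, (f p).val < 2 * m := fun p => by
      simpa [f] using (e1 p).isLt
    set h₁ : Perm (Fin n) := (interleave g').viaEmbedding f with hh₁
    have hord1 : orderOf h₁ = 2 * orderOf g := by
      have h3 := orderOf_injective (Perm.viaEmbeddingHom f)
        (Perm.viaEmbeddingHom_injective f) (interleave g')
      rw [Perm.viaEmbeddingHom_apply] at h3
      rw [hh₁, h3, orderOf_interleave, hg', hg2]
    have hfix : ∀ x : Fin n, 2 * m ≤ x.val → h₁ x = x := fun x hx =>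
      Perm.viaEmbedding_apply_of_notMem _ _ x (by rintro ⟨p, rfl⟩; have := hfval p; omega)
    set a : Fin n := ⟨2 * m, by omega⟩ with ha
    set b : Fin n := ⟨2 * m + 1, by omega⟩ with hb
    have hab : a ≠ b := Fin.ne_of_val_ne (by simp [ha, hb])
    have hdis : h₁.Disjoint (swap a b) := by
      intro x
      by_cases hx : 2 * m ≤ x.val
      · left; exact hfix x hx
      · right
        exact swap_apply_of_ne_of_ne (Fin.ne_of_val_ne (by simp [ha]; omega))
          (Fin.ne_of_val_ne (by simp [hb]; omega))
    rcases Int.units_eq_one_or (Perm.sign h₁) with hsgn | hsgn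
    · refine ⟨⟨h₁, Perm.mem_alternatingGroup.mpr hsgn⟩, ?_⟩
      rw [Subgroup.orderOf_mk, hord1]
    · have hmem : h₁ * swap a b ∈ alternatingGroup (Fin n) := by
        rw [Perm.mem_alternatingGroup, map_mul, hsgn, Perm.sign_swap hab]
        decide
      refine ⟨⟨_, hmem⟩, ?_⟩
      rw [Subgroup.orderOf_mk, hdis.orderOf, orderOf_swap' hab, hord1]
      exact Nat.dvd_antisymm (Nat.lcm_dvd dvd_rfl ⟨orderOf g, rfl⟩) (Nat.dvd_lcm_left _ _)
end

section
/- Let g ∈ A_n with g = g₂g₃ = g₃g₂ where g₂ has order 2^α and g₃ has order 3^β with α, β > 0. If n ≥ 2^{α+1} + |supp(g₃)| + 2, then A_n contains an element of order 2·|g|; and if n ≥ |supp(g₂)| + 3^{β+1}, then A_n contains an element of order 3·|g|. -/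
open Equiv

lemma exists_cycle_support_eq {m : Type*} [Fintype m] [DecidableEq m]
    (T : Finset m) (h : 2 ≤ T.card) :
    ∃ c : Perm m, c.IsCycle ∧ c.support = T := by
  refine ⟨T.toList.formPerm, ?_, ?_⟩
  · exact List.isCycle_formPerm T.nodup_toList (by simpa using h)
  · rw [List.support_formPerm_of_nodup _ T.nodup_toList, Finset.toList_toFinset]
    intro x hx
    apply_fun List.length at hx
    simp [Finset.length_toList] at hx
    omega

/-- Lemma 6.6(2): let `g = g₂g₃ = g₃g₂ ∈ A_n` with `|g₂| = 2^α`, `|g₃| = 3^β`,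
`α, β > 0`. If `n ≥ 2^(α+1) + |supp(g₃)| + 2` then `A_n` has an element of order
`2|g|`; and if `n ≥ |supp(g₂)| + 3^(β+1)` then `A_n` has an element of order `3|g|`. -/
theorem exists_larger_order_elements (n : ℕ) (α β : ℕ) (hα : 0 < α) (hβ : 0 < β)
    (g g₂ g₃ : alternatingGroup (Fin n))
    (hmul : g = g₂ * g₃) (hcomm : g₂ * g₃ = g₃ * g₂)
    (ho2 : orderOf g₂ = 2 ^ α) (ho3 : orderOf g₃ = 3 ^ β) :
    ((2 ^ (α + 1) + ((g₃ : Perm (Fin n)).support.card) + 2 ≤ n →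
        ∃ h : alternatingGroup (Fin n), orderOf h = 2 * orderOf g) ∧
     (((g₂ : Perm (Fin n)).support.card) + 3 ^ (β + 1) ≤ n →
        ∃ h : alternatingGroup (Fin n), orderOf h = 3 * orderOf g)) := by
  have hcop : Nat.Coprime (2 ^ α) (3 ^ β) := Nat.Coprime.pow _ _ (by norm_num)
  have hog : orderOf g = 2 ^ α * 3 ^ β := by
    have hc : Commute g₂ g₃ := hcomm
    rw [hmul, hc.orderOf_mul_eq_mul_orderOf_of_coprime (by rw [ho2, ho3]; exact hcop), ho2, ho3]
  have ho2' : orderOf (g₂ : Perm (Fin n)) = 2 ^ α := by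
    rw [Subgroup.orderOf_coe, ho2]
  have ho3' : orderOf (g₃ : Perm (Fin n)) = 3 ^ β := by
    rw [Subgroup.orderOf_coe, ho3]
  constructor
  · intro hn
    set S := (g₃ : Perm (Fin n)).support with hS
    have hcompl : 2 ^ (α + 1) + 2 ≤ Sᶜ.card := by
      rw [Finset.card_compl, Fintype.card_fin]
      omega
    obtain ⟨T, hTsub, hTcard⟩ := Finset.exists_subset_card_eq (s := Sᶜ) (n := 2 ^ (α + 1) + 2) hcompl
    obtain ⟨T₁, hT₁sub, hT₁card⟩ := Finset.exists_subset_card_eq (s := T) (n := 2 ^ (α + 1)) (by omega)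
    have hT₂card : (T \ T₁).card = 2 := by
      rw [Finset.card_sdiff_of_subset hT₁sub]; omega
    obtain ⟨a, b, hab, hT₂⟩ := Finset.card_eq_two.mp hT₂card
    have h2le : 2 ≤ 2 ^ (α + 1) := Nat.one_lt_two_pow (by omega)
    obtain ⟨c, hc_cyc, hc_supp⟩ := exists_cycle_support_eq T₁ (hT₁card ▸ h2le)
    have hcardc : c.support.card = 2 ^ (α + 1) := by rw [hc_supp, hT₁card]
    have hoc : orderOf c = 2 ^ (α + 1) := by rw [hc_cyc.orderOf, hcardc]
    set τ : Perm (Fin n) := swap a b with hτ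
    have hτsupp : τ.support = {a, b} := Perm.support_swap hab
    have hoτ : orderOf τ = 2 := by
      rw [(Perm.isCycle_swap hab).orderOf, hτsupp, Finset.card_pair hab]
    -- disjointness
    have hd12 : c.Disjoint τ := by
      rw [Perm.disjoint_iff_disjoint_support, hc_supp, hτsupp, ← hT₂]
      exact Finset.disjoint_sdiff
    have hdisjS : ∀ u : Finset (Fin n), u ⊆ T → _root_.Disjoint u S := by
      intro u hu
      exact Finset.disjoint_left.mpr fun x hx hxS =>
        (Finset.mem_compl.mp (hTsub (hu hx))) hxS
    have hd13 : c.Disjoint (g₃ : Perm (Fin n)) := by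
      rw [Perm.disjoint_iff_disjoint_support, hc_supp]
      exact hdisjS T₁ hT₁sub
    have hd23 : τ.Disjoint (g₃ : Perm (Fin n)) := by
      rw [Perm.disjoint_iff_disjoint_support, hτsupp, ← hT₂]
      exact hdisjS _ Finset.sdiff_subset
    have hd : (c * τ).Disjoint (g₃ : Perm (Fin n)) := hd13.mul_left hd23
    have hocτ : orderOf (c * τ) = 2 ^ (α + 1) := by
      rw [hd12.orderOf, hoc, hoτ]
      exact (Nat.lcm_dvd dvd_rfl (dvd_pow_self 2 (Nat.succ_ne_zero α))).antisymm (Nat.dvd_lcm_left _ _)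
    have hop : orderOf (c * τ * (g₃ : Perm (Fin n))) = 2 ^ (α + 1) * 3 ^ β := by
      rw [hd.orderOf, hocτ, ho3']
      exact Nat.Coprime.lcm_eq_mul (Nat.Coprime.pow _ _ (by norm_num))
    have hsign : Perm.sign (c * τ * (g₃ : Perm (Fin n))) = 1 := by
      have h1 : Perm.sign c = -1 := by
        rw [hc_cyc.sign, hcardc, Even.neg_one_pow ⟨2 ^ α, by rw [pow_succ]; ring⟩]
      have h3 : Perm.sign (g₃ : Perm (Fin n)) = 1 :=
        Perm.mem_alternatingGroup.mp g₃.2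
      rw [map_mul, map_mul, h1, Perm.sign_swap hab, h3]
      norm_num
    refine ⟨⟨c * τ * (g₃ : Perm (Fin n)), Perm.mem_alternatingGroup.mpr hsign⟩, ?_⟩
    rw [Subgroup.orderOf_mk, hop, hog, pow_succ]
    ring
  · intro hn
    set S := (g₂ : Perm (Fin n)).support with hS
    have hcompl : 3 ^ (β + 1) ≤ Sᶜ.card := by
      rw [Finset.card_compl, Fintype.card_fin]
      omega
    obtain ⟨T₁, hT₁sub, hT₁card⟩ := Finset.exists_subset_card_eq (s := Sᶜ) (n := 3 ^ (β + 1)) hcompl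
    have h2le : 2 ≤ 3 ^ (β + 1) := by
      calc 2 ≤ 3 ^ 1 := by norm_num
      _ ≤ 3 ^ (β + 1) := Nat.pow_le_pow_right (by norm_num) (by omega)
    obtain ⟨c, hc_cyc, hc_supp⟩ := exists_cycle_support_eq T₁ (hT₁card ▸ h2le)
    have hcardc : c.support.card = 3 ^ (β + 1) := by rw [hc_supp, hT₁card]
    have hoc : orderOf c = 3 ^ (β + 1) := by rw [hc_cyc.orderOf, hcardc]
    have hd : c.Disjoint (g₂ : Perm (Fin n)) := by
      rw [Perm.disjoint_iff_disjoint_support, hc_supp]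
      exact Finset.disjoint_left.mpr fun x hx hxS =>
        (Finset.mem_compl.mp (hT₁sub hx)) hxS
    have hop : orderOf (c * (g₂ : Perm (Fin n))) = 3 ^ (β + 1) * 2 ^ α := by
      rw [hd.orderOf, hoc, ho2']
      exact Nat.Coprime.lcm_eq_mul (Nat.Coprime.pow _ _ (by norm_num))
    have hsign : Perm.sign (c * (g₂ : Perm (Fin n))) = 1 := by
      have h1 : Perm.sign c = 1 := by
        rw [hc_cyc.sign, hcardc, Odd.neg_one_pow (Odd.pow (⟨1, by norm_num⟩ : Odd 3))]
        norm_num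
      have h2 : Perm.sign (g₂ : Perm (Fin n)) = 1 :=
        Perm.mem_alternatingGroup.mp g₂.2
      rw [map_mul, h1, h2, one_mul]
    refine ⟨⟨c * (g₂ : Perm (Fin n)), Perm.mem_alternatingGroup.mpr hsign⟩, ?_⟩
    rw [Subgroup.orderOf_mk, hop, hog, pow_succ]
    ring
end

section
/- Let g ∈ S_n (n ≥ 2) be an element of even order with the maximal possible support among elements of S_n of the same order; then |supp(g)| ≥ n − 1. If instead g ∈ A_n has even order and maximal support among elements of A_n of the same order, then |supp(g)| ≥ n − 3. If the order of g is a multiple of 3 and g has maximal support (in S_n or A_n), then |supp(g)| ≥ n − 2. -/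
open Equiv

private lemma my_disj {n : ℕ} {g τ : Perm (Fin n)} (hsub : τ.support ⊆ g.supportᶜ) :
    g.Disjoint τ := by
  rw [Perm.disjoint_iff_disjoint_support]
  exact Finset.disjoint_left.mpr fun a ha hb => (Finset.mem_compl.mp (hsub hb)) ha

private lemma my_contra {n : ℕ} {g τ : Perm (Fin n)} (hsub : τ.support ⊆ g.supportᶜ)
    (hτ : τ ≠ 1) (hle : (g * τ).support.card ≤ g.support.card) : False := by
  have hd := my_disj hsub
  rw [hd.support_mul,
    Finset.card_union_of_disjoint (Perm.disjoint_iff_disjoint_support.mp hd)] at hle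
  have h0 : τ.support.card ≠ 0 := by
    simp [Finset.card_eq_zero, Perm.support_eq_empty_iff, hτ]
  omega

private lemma my_order {n : ℕ} {g τ : Perm (Fin n)} (hsub : τ.support ⊆ g.supportᶜ)
    (hdvd : orderOf τ ∣ orderOf g) : orderOf (g * τ) = orderOf g := by
  rw [(my_disj hsub).orderOf]
  exact Nat.dvd_antisymm (Nat.lcm_dvd dvd_rfl hdvd) (Nat.dvd_lcm_left _ _)

private lemma orderOf_swap {n : ℕ} {a b : Fin n} (hab : a ≠ b) :
    orderOf (swap a b) = 2 := by
  haveI : Fact (Nat.Prime 2) := ⟨Nat.prime_two⟩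
  refine orderOf_eq_prime ?_ ?_
  · rw [pow_two, swap_mul_self]
  · simpa using hab

private lemma card_compl_support {n : ℕ} (g : Perm (Fin n)) :
    g.supportᶜ.card = n - g.support.card := by
  rw [Finset.card_compl, Fintype.card_fin]

/-- Lemma 6.1: lower bounds on the support of elements of maximal support.
An element `g` of `G = S_n` or `A_n` has maximal support if
`|supp(h)| ≤ |supp(g)|` for every `h ∈ G` of the same order. Then:
(1) in `S_n` (`n ≥ 2`), an element of even order and maximal support has
`|supp(g)| ≥ n - 1`;
(2) in `A_n`, an element of even order and maximal support has `|supp(g)| ≥ n - 3`;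
(3) in `S_n` or `A_n`, an element of order divisible by 3 and maximal support has
`|supp(g)| ≥ n - 2`. -/
theorem maximal_support_bounds (n : ℕ) (hn : 2 ≤ n) :
    (∀ g : Perm (Fin n), Even (orderOf g) →
      (∀ h : Perm (Fin n), orderOf h = orderOf g → h.support.card ≤ g.support.card) →
      n - 1 ≤ g.support.card) ∧
    (∀ g : alternatingGroup (Fin n), Even (orderOf g) →
      (∀ h : alternatingGroup (Fin n), orderOf h = orderOf g →
        (h : Perm (Fin n)).support.card ≤ (g : Perm (Fin n)).support.card) →
      n - 3 ≤ (g : Perm (Fin n)).support.card) ∧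
    (∀ g : Perm (Fin n), 3 ∣ orderOf g →
      (∀ h : Perm (Fin n), orderOf h = orderOf g → h.support.card ≤ g.support.card) →
      n - 2 ≤ g.support.card) ∧
    (∀ g : alternatingGroup (Fin n), 3 ∣ orderOf g →
      (∀ h : alternatingGroup (Fin n), orderOf h = orderOf g →
        (h : Perm (Fin n)).support.card ≤ (g : Perm (Fin n)).support.card) →
      n - 2 ≤ (g : Perm (Fin n)).support.card) := by
  have hcoe : ∀ h : alternatingGroup (Fin n), orderOf (h : Perm (Fin n)) = orderOf h :=
    fun h => orderOf_injective (alternatingGroup (Fin n)).subtype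
      (Subgroup.subtype_injective _) h
  refine ⟨?_, ?_, ?_, ?_⟩
  · -- S_n, even order
    intro g heven hmax
    by_contra hlt
    push_neg at hlt
    have hc : 1 < g.supportᶜ.card := by
      rw [card_compl_support]; omega
    obtain ⟨a, ha, b, hb, hab⟩ := Finset.one_lt_card.mp hc
    have hsub : (swap a b).support ⊆ g.supportᶜ := by
      rw [Perm.support_swap hab]
      exact Finset.insert_subset ha (Finset.singleton_subset_iff.mpr hb)
    have hdvd : orderOf (swap a b) ∣ orderOf g := by
      rw [orderOf_swap hab]; exact heven.two_dvd
    exact my_contra hsub (by simpa using hab)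
      (hmax _ (my_order hsub hdvd))
  · -- A_n, even order
    intro g heven hmax
    by_contra hlt
    push_neg at hlt
    set G : Perm (Fin n) := (g : Perm (Fin n)) with hG
    have hcard := Finset.card_le_univ G.support
    rw [Fintype.card_fin] at hcard
    have hc : 1 < G.supportᶜ.card := by rw [card_compl_support]; omega
    obtain ⟨a, ha, b, hb, hab⟩ := Finset.one_lt_card.mp hc
    have hc2 : 1 < ((G.supportᶜ.erase a).erase b).card := by
      by_cases h : b ∈ G.supportᶜ.erase a
      · rw [Finset.card_erase_of_mem h, Finset.card_erase_of_mem ha,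
          card_compl_support]
        omega
      · exact absurd (Finset.mem_erase.mpr ⟨(Ne.symm hab), hb⟩) h
    obtain ⟨c, hc', d, hd', hcd⟩ := Finset.one_lt_card.mp hc2
    obtain ⟨hcb, hca, hcmem⟩ : c ≠ b ∧ c ≠ a ∧ c ∈ G.supportᶜ :=
      ⟨(Finset.mem_erase.mp hc').1,
        (Finset.mem_erase.mp (Finset.mem_erase.mp hc').2).1,
        (Finset.mem_erase.mp (Finset.mem_erase.mp hc').2).2⟩
    obtain ⟨hdb, hda, hdmem⟩ : d ≠ b ∧ d ≠ a ∧ d ∈ G.supportᶜ :=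
      ⟨(Finset.mem_erase.mp hd').1,
        (Finset.mem_erase.mp (Finset.mem_erase.mp hd').2).1,
        (Finset.mem_erase.mp (Finset.mem_erase.mp hd').2).2⟩
    set τ : Perm (Fin n) := swap a b * swap c d with hτdef
    have hdisj : (swap a b).Disjoint (swap c d) := by
      rw [Perm.disjoint_iff_disjoint_support, Perm.support_swap hab,
        Perm.support_swap hcd]
      simp [Finset.disjoint_left, hca.symm, hcb.symm, hda.symm, hdb.symm]
    have hτsupp : τ.support = {a, b} ∪ {c, d} := by
      rw [hτdef, hdisj.support_mul, Perm.support_swap hab, Perm.support_swap hcd]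
    have hsub : τ.support ⊆ G.supportᶜ := by
      rw [hτsupp]
      intro x hx
      simp only [Finset.mem_union, Finset.mem_insert, Finset.mem_singleton] at hx
      rcases hx with (rfl | rfl) | (rfl | rfl)
      exacts [ha, hb, hcmem, hdmem]
    have hτne : τ ≠ 1 := by
      intro h
      have : a ∈ τ.support := by
        rw [hτsupp]; simp
      rw [h] at this; simp at this
    have hτord : orderOf τ = 2 := by
      rw [hτdef, hdisj.orderOf, orderOf_swap hab, orderOf_swap hcd]
      decide
    have hdvd : orderOf τ ∣ orderOf G := by
      rw [hτord, hcoe g]; exact heven.two_dvd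
    have hsign : Perm.sign τ = 1 := by
      rw [hτdef, Perm.sign_mul, Perm.sign_swap hab, Perm.sign_swap hcd]
      decide
    have hmem : G * τ ∈ alternatingGroup (Fin n) := by
      rw [Perm.mem_alternatingGroup, Perm.sign_mul, hsign,
        Perm.mem_alternatingGroup.mp g.2, mul_one]
    have hord : orderOf (⟨G * τ, hmem⟩ : alternatingGroup (Fin n)) = orderOf g := by
      rw [← hcoe g, ← hcoe ⟨G * τ, hmem⟩]
      exact my_order hsub hdvd
    exact my_contra hsub hτne (hmax ⟨G * τ, hmem⟩ hord)
  · -- S_n, 3 ∣ order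
    intro g h3 hmax
    by_contra hlt
    push_neg at hlt
    have hcard := Finset.card_le_univ g.support
    rw [Fintype.card_fin] at hcard
    have hc : 1 < g.supportᶜ.card := by rw [card_compl_support]; omega
    obtain ⟨a, ha, b, hb, hab⟩ := Finset.one_lt_card.mp hc
    have hc2 : 0 < ((g.supportᶜ.erase a).erase b).card := by
      by_cases h : b ∈ g.supportᶜ.erase a
      · rw [Finset.card_erase_of_mem h, Finset.card_erase_of_mem ha,
          card_compl_support]
        omega
      · exact absurd (Finset.mem_erase.mpr ⟨(Ne.symm hab), hb⟩) h
    obtain ⟨c, hc'⟩ := Finset.card_pos.mp hc2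
    obtain ⟨hcb, hca, hcmem⟩ : c ≠ b ∧ c ≠ a ∧ c ∈ g.supportᶜ :=
      ⟨(Finset.mem_erase.mp hc').1,
        (Finset.mem_erase.mp (Finset.mem_erase.mp hc').2).1,
        (Finset.mem_erase.mp (Finset.mem_erase.mp hc').2).2⟩
    set τ : Perm (Fin n) := swap a b * swap a c with hτdef
    have h3c : τ.IsThreeCycle :=
      Perm.isThreeCycle_swap_mul_swap_same hab hca.symm hcb.symm
    have hsub : τ.support ⊆ g.supportᶜ := by
      refine subset_trans (Perm.support_mul_le _ _) ?_
      rw [Perm.support_swap hab, Perm.support_swap hca.symm]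
      intro x hx
      simp only [Finset.sup_eq_union, Finset.mem_union, Finset.mem_insert,
        Finset.mem_singleton] at hx
      rcases hx with (rfl | rfl) | (rfl | rfl)
      exacts [ha, hb, ha, hcmem]
    have hτne : τ ≠ 1 := by
      intro h
      have := h3c.card_support
      rw [h] at this; simp at this
    have hdvd : orderOf τ ∣ orderOf g := by rw [h3c.orderOf]; exact h3
    exact my_contra hsub hτne (hmax _ (my_order hsub hdvd))
  · -- A_n, 3 ∣ order
    intro g h3 hmax
    by_contra hlt
    push_neg at hlt
    set G : Perm (Fin n) := (g : Perm (Fin n)) with hG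
    have hcard := Finset.card_le_univ G.support
    rw [Fintype.card_fin] at hcard
    have hc : 1 < G.supportᶜ.card := by rw [card_compl_support]; omega
    obtain ⟨a, ha, b, hb, hab⟩ := Finset.one_lt_card.mp hc
    have hc2 : 0 < ((G.supportᶜ.erase a).erase b).card := by
      by_cases h : b ∈ G.supportᶜ.erase a
      · rw [Finset.card_erase_of_mem h, Finset.card_erase_of_mem ha,
          card_compl_support]
        omega
      · exact absurd (Finset.mem_erase.mpr ⟨(Ne.symm hab), hb⟩) h
    obtain ⟨c, hc'⟩ := Finset.card_pos.mp hc2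
    obtain ⟨hcb, hca, hcmem⟩ : c ≠ b ∧ c ≠ a ∧ c ∈ G.supportᶜ :=
      ⟨(Finset.mem_erase.mp hc').1,
        (Finset.mem_erase.mp (Finset.mem_erase.mp hc').2).1,
        (Finset.mem_erase.mp (Finset.mem_erase.mp hc').2).2⟩
    set τ : Perm (Fin n) := swap a b * swap a c with hτdef
    have h3c : τ.IsThreeCycle :=
      Perm.isThreeCycle_swap_mul_swap_same hab hca.symm hcb.symm
    have hsub : τ.support ⊆ G.supportᶜ := by
      refine subset_trans (Perm.support_mul_le _ _) ?_
      rw [Perm.support_swap hab, Perm.support_swap hca.symm]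
      intro x hx
      simp only [Finset.sup_eq_union, Finset.mem_union, Finset.mem_insert,
        Finset.mem_singleton] at hx
      rcases hx with (rfl | rfl) | (rfl | rfl)
      exacts [ha, hb, ha, hcmem]
    have hτne : τ ≠ 1 := by
      intro h
      have := h3c.card_support
      rw [h] at this; simp at this
    have hdvd : orderOf τ ∣ orderOf G := by rw [h3c.orderOf, hcoe g]; exact h3
    have hmem : G * τ ∈ alternatingGroup (Fin n) := by
      rw [Perm.mem_alternatingGroup, Perm.sign_mul,
        Perm.IsThreeCycle.sign h3c, Perm.mem_alternatingGroup.mp g.2, mul_one]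
    have hord : orderOf (⟨G * τ, hmem⟩ : alternatingGroup (Fin n)) = orderOf g := by
      rw [← hcoe g, ← hcoe ⟨G * τ, hmem⟩]
      exact my_order hsub hdvd
    exact my_contra hsub hτne (hmax ⟨G * τ, hmem⟩ hord)
end
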